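/- arXiv:1310.3555 — 7 statements merged into one kernel-verified Lean document; each statement's English description precedes it below -/
import Mathlib

section
/- Let V ⊆ ℂ∖{0,1} be a nonempty connected open set, c₁, c₂ ∈ ℂ with c₁ + c₂ = 1, and let ω₀, ω₁ : V → ℂ be holomorphic solutions of α(1−α)f″(α) + (1−2α)f′(α) − c₁c₂·f(α) = 0 with ω₀ nowhere vanishing. Set τ := ω₁/ω₀. Suppose there is a sequence (αₙ) in V with αₙ → 0, ω₀(αₙ) → 1, and αₙ·τ′(αₙ) → 1/(2πi). Then for every α ∈ V: α·τ′(α) = 1/(2πi·(1−α)·ω₀(α)²); equivalently, α(1−α)·ω₀(α)²·τ′(α) = 1/(2πi) identically on V. (In the coordinate τ this says ∂_τα = α(1−α)ω₀², where ∂_τ = (1/2πi)d/dτ.) -/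
open Complex Filter Topology

/-- Let `ω₀, ω₁` be holomorphic solutions of the hypergeometric equation
`α(1−α)f″ + (1−2α)f′ − c₁c₂ f = 0` (with `c₁ + c₂ = 1`) on a nonempty connected open set
`V ⊆ ℂ∖{0,1}`, with `ω₀` nowhere vanishing, and set `τ = ω₁/ω₀`.  If along some sequence
`αₙ → 0` in `V` one has `ω₀(αₙ) → 1` and `αₙ·τ′(αₙ) → 1/(2πi)`, then
`α·τ′(α) = 1/(2πi(1−α)ω₀(α)²)` on `V`; equivalently `α(1−α)ω₀²τ′ = 1/(2πi)` on `V`. -/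
theorem stmt_1 (V : Set ℂ) (hVopen : IsOpen V) (hVconn : IsConnected V)
    (hV01 : ∀ α ∈ V, α ≠ 0 ∧ α ≠ 1)
    (c₁ c₂ : ℂ) (hc : c₁ + c₂ = 1)
    (ω₀ ω₁ : ℂ → ℂ)
    (h₀ : DifferentiableOn ℂ ω₀ V) (h₁ : DifferentiableOn ℂ ω₁ V)
    (h₀ne : ∀ α ∈ V, ω₀ α ≠ 0)
    (heq₀ : ∀ α ∈ V,
      α * (1 - α) * deriv (deriv ω₀) α + (1 - 2 * α) * deriv ω₀ α - c₁ * c₂ * ω₀ α = 0)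
    (heq₁ : ∀ α ∈ V,
      α * (1 - α) * deriv (deriv ω₁) α + (1 - 2 * α) * deriv ω₁ α - c₁ * c₂ * ω₁ α = 0)
    (τ : ℂ → ℂ) (hτ : τ = fun α => ω₁ α / ω₀ α)
    (a : ℕ → ℂ) (haV : ∀ n, a n ∈ V)
    (ha0 : Tendsto a atTop (𝓝 0))
    (haω : Tendsto (fun n => ω₀ (a n)) atTop (𝓝 1))
    (haτ : Tendsto (fun n => a n * deriv τ (a n)) atTop
      (𝓝 (1 / (2 * (Real.pi : ℂ) * Complex.I)))) :
    ∀ α ∈ V,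
      α * deriv τ α = 1 / (2 * (Real.pi : ℂ) * Complex.I * (1 - α) * (ω₀ α) ^ 2) ∧
      α * (1 - α) * (ω₀ α) ^ 2 * deriv τ α = 1 / (2 * (Real.pi : ℂ) * Complex.I) := by
  -- Analyticity of the solutions and their derivatives
  have hA₀ : AnalyticOnNhd ℂ ω₀ V := h₀.analyticOnNhd hVopen
  have hA₁ : AnalyticOnNhd ℂ ω₁ V := h₁.analyticOnNhd hVopen
  have hA₀' : AnalyticOnNhd ℂ (deriv ω₀) V := hA₀.deriv
  have hA₁' : AnalyticOnNhd ℂ (deriv ω₁) V := hA₁.deriv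
  -- The (rescaled) Wronskian
  set W : ℂ → ℂ := fun α => ω₀ α * deriv ω₁ α - ω₁ α * deriv ω₀ α with hW
  set g : ℂ → ℂ := fun α => α * (1 - α) * W α with hg
  have hgA : AnalyticOnNhd ℂ g V := by
    apply AnalyticOnNhd.mul
    · exact (analyticOnNhd_id.mul (analyticOnNhd_const.sub analyticOnNhd_id))
    · exact (hA₀.mul hA₁').sub (hA₁.mul hA₀')
  -- pointwise derivative facts
  have hd₀ : ∀ α ∈ V, HasDerivAt ω₀ (deriv ω₀ α) α := fun α hα =>
    ((hA₀ α hα).differentiableAt).hasDerivAt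
  have hd₁ : ∀ α ∈ V, HasDerivAt ω₁ (deriv ω₁ α) α := fun α hα =>
    ((hA₁ α hα).differentiableAt).hasDerivAt
  have hd₀' : ∀ α ∈ V, HasDerivAt (deriv ω₀) (deriv (deriv ω₀) α) α := fun α hα =>
    ((hA₀' α hα).differentiableAt).hasDerivAt
  have hd₁' : ∀ α ∈ V, HasDerivAt (deriv ω₁) (deriv (deriv ω₁) α) α := fun α hα =>
    ((hA₁' α hα).differentiableAt).hasDerivAt
  -- g has zero derivative on V
  have hg0 : ∀ α ∈ V, HasDerivAt g 0 α := by
    intro α hα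
    have hid : HasDerivAt (fun x : ℂ => x * (1 - x)) (1 * (1 - α) + α * (0 - 1)) α :=
      (hasDerivAt_id α).mul ((hasDerivAt_const α (1 : ℂ)).sub (hasDerivAt_id α))
    have hWd : HasDerivAt W
        ((deriv ω₀ α * deriv ω₁ α + ω₀ α * deriv (deriv ω₁) α) -
         (deriv ω₁ α * deriv ω₀ α + ω₁ α * deriv (deriv ω₀) α)) α :=
      ((hd₀ α hα).mul (hd₁' α hα)).sub ((hd₁ α hα).mul (hd₀' α hα))
    have this : HasDerivAt (fun y => y * (1 - y) * W y) _ α := hid.mul hWd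
    convert this using 1
    have e₀ := heq₀ α hα
    have e₁ := heq₁ α hα
    simp only [hW]
    linear_combination (- ω₀ α) * e₁ + ω₁ α * e₀
  -- τ' = W / ω₀²
  have hdτ : ∀ α ∈ V, deriv τ α = W α / (ω₀ α) ^ 2 := by
    intro α hα
    have h : HasDerivAt τ ((deriv ω₁ α * ω₀ α - ω₁ α * deriv ω₀ α) / (ω₀ α) ^ 2) α := by
      rw [hτ]
      exact (hd₁ α hα).div (hd₀ α hα) (h₀ne α hα)
    rw [h.deriv, hW]
    ring_nf
  -- g is constant on V
  have hgconst : ∀ α ∈ V, g α = g (a 0) := by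
    have hloc : ∀ x ∈ V, ∀ᶠ y in 𝓝 x, g y = g x := by
      intro x hx
      obtain ⟨ε, hε, hball⟩ := Metric.isOpen_iff.mp hVopen x hx
      have hconv : Convex ℝ (Metric.ball x ε) := convex_ball x ε
      have hdiff : DifferentiableOn ℂ g (Metric.ball x ε) := fun y hy =>
        ((hgA y (hball hy)).differentiableAt).differentiableWithinAt
      have hfd : ∀ y ∈ Metric.ball x ε, fderivWithin ℂ g (Metric.ball x ε) y = 0 := by
        intro y hy
        rw [fderivWithin_of_isOpen Metric.isOpen_ball hy]
        rw [(hg0 y (hball hy)).hasFDerivAt.fderiv]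
        exact ContinuousLinearMap.ext fun z => by simp
      filter_upwards [Metric.ball_mem_nhds x hε] with y hy
      exact hconv.is_const_of_fderivWithin_eq_zero hdiff hfd hy (Metric.mem_ball_self hε)
    intro α hα
    have hEq : g =ᶠ[𝓝 (a 0)] (fun _ => g (a 0)) := hloc (a 0) (haV 0)
    exact hgA.eqOn_of_preconnected_of_eventuallyEq analyticOnNhd_const
      hVconn.isPreconnected (haV 0) hEq hα
  -- compute the constant via the limit
  have hseq : ∀ n, g (a n) = (1 - a n) * (ω₀ (a n)) ^ 2 * (a n * deriv τ (a n)) := by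
    intro n
    rw [hdτ (a n) (haV n)]
    have h0 := h₀ne (a n) (haV n)
    field_simp [hg]
    ring
  have hlim1 : Tendsto (fun n => g (a n)) atTop (𝓝 (1 / (2 * (Real.pi : ℂ) * Complex.I))) := by
    have : Tendsto (fun n => (1 - a n) * (ω₀ (a n)) ^ 2 * (a n * deriv τ (a n))) atTop
        (𝓝 ((1 - 0) * 1 ^ 2 * (1 / (2 * (Real.pi : ℂ) * Complex.I)))) :=
      ((tendsto_const_nhds.sub ha0).mul (haω.pow 2)).mul haτ
    simp only [sub_zero, one_pow, one_mul] at this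
    simpa only [hseq] using this
  have hlim2 : Tendsto (fun n => g (a n)) atTop (𝓝 (g (a 0))) := by
    have : (fun n => g (a n)) = fun _ => g (a 0) := funext fun n => hgconst (a n) (haV n)
    rw [this]; exact tendsto_const_nhds
  have hc0 : g (a 0) = 1 / (2 * (Real.pi : ℂ) * Complex.I) := tendsto_nhds_unique hlim2 hlim1
  -- conclusion
  intro α hα
  have hπ : (2 * (Real.pi : ℂ) * Complex.I) ≠ 0 := by
    simp [Real.pi_ne_zero, Complex.I_ne_zero]
  obtain ⟨hα0, hα1⟩ := hV01 α hα
  have hα1' : (1 : ℂ) - α ≠ 0 := sub_ne_zero.mpr (Ne.symm hα1)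
  have h0 := h₀ne α hα
  have hkey : α * (1 - α) * W α = 1 / (2 * (Real.pi : ℂ) * Complex.I) := by
    have := hgconst α hα
    rw [hc0] at this
    exact this
  rw [eq_div_iff hπ] at hkey
  constructor
  · rw [hdτ α hα]
    field_simp
    simp only [hW] at hkey ⊢
    linear_combination hkey
  · rw [hdτ α hα]
    field_simp
    simp only [hW] at hkey ⊢
    linear_combination hkey
end

section
/- Assume Setting (★): U ⊆ ℂ is a nonempty connected open set, r is a nonzero real number, α : U → ℂ∖{0,1} is holomorphic, A : U → ℂ is holomorphic and nowhere vanishing, (1/2πi)α′ = α(1−α)A² on U, and A = ω₀ ∘ α for some holomorphic solution ω₀ of α(1−α)ω₀″ + (1−2α)ω₀′ − (1/r)(1−1/r)ω₀ = 0 on an open set containing α(U). Define E := (1−2α)A² + 2r·(∂_τA)/A, where ∂_τ = (1/2πi)d/dτ. Then ∂_τE = (1/2r)(E² − A⁴) on U. -/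
open Complex Filter Topology

/-- Setting (★): `U ⊆ ℂ` nonempty connected open, `r` a nonzero real,
`α : U → ℂ∖{0,1}` holomorphic, `A : U → ℂ` holomorphic nowhere vanishing,
`(1/2πi)α′ = α(1−α)A²` on `U`, and `A = ω₀ ∘ α` for a holomorphic solution `ω₀` of
`z(1−z)ω₀″ + (1−2z)ω₀′ − (1/r)(1−1/r)ω₀ = 0` on an open set `W ⊇ α(U)`.
With `E := (1−2α)A² + 2r·(∂_τA)/A` (where `∂_τ = (1/2πi)d/dτ`), one has
`∂_τE = (1/2r)(E² − A⁴)` on `U`. -/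
theorem stmt_2 (U : Set ℂ) (hUopen : IsOpen U) (hUconn : IsConnected U)
    (r : ℝ) (hr : r ≠ 0)
    (α A : ℂ → ℂ)
    (hα : DifferentiableOn ℂ α U) (hα01 : ∀ τ ∈ U, α τ ≠ 0 ∧ α τ ≠ 1)
    (hA : DifferentiableOn ℂ A U) (hAne : ∀ τ ∈ U, A τ ≠ 0)
    (hrel : ∀ τ ∈ U,
      (1 / (2 * (Real.pi : ℂ) * Complex.I)) * deriv α τ = α τ * (1 - α τ) * (A τ) ^ 2)
    (ω₀ : ℂ → ℂ) (W : Set ℂ) (hWopen : IsOpen W) (hWsub : α '' U ⊆ W)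
    (hω₀ : DifferentiableOn ℂ ω₀ W)
    (hω₀eq : ∀ z ∈ W,
      z * (1 - z) * deriv (deriv ω₀) z + (1 - 2 * z) * deriv ω₀ z
        - (1 / (r : ℂ)) * (1 - 1 / (r : ℂ)) * ω₀ z = 0)
    (hAω : ∀ τ ∈ U, A τ = ω₀ (α τ))
    (E : ℂ → ℂ)
    (hE : E = fun τ => (1 - 2 * α τ) * (A τ) ^ 2
      + 2 * (r : ℂ) * ((1 / (2 * (Real.pi : ℂ) * Complex.I)) * deriv A τ) / (A τ)) :
    ∀ τ ∈ U,
      (1 / (2 * (Real.pi : ℂ) * Complex.I)) * deriv E τ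
        = (1 / (2 * (r : ℂ))) * ((E τ) ^ 2 - (A τ) ^ 4) := by
  have hrC : (r : ℂ) ≠ 0 := by exact_mod_cast hr
  -- chain rule for A = ω₀ ∘ α on U
  have hchain : ∀ τ ∈ U, HasDerivAt A (deriv ω₀ (α τ) * deriv α τ) τ := by
    intro τ hτ
    have hατ : HasDerivAt α (deriv α τ) τ :=
      (hα.differentiableAt (hUopen.mem_nhds hτ)).hasDerivAt
    have hωτ : HasDerivAt ω₀ (deriv ω₀ (α τ)) (α τ) :=
      (hω₀.differentiableAt (hWopen.mem_nhds (hWsub ⟨τ, hτ, rfl⟩))).hasDerivAt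
    have hcomp : HasDerivAt (ω₀ ∘ α) (deriv ω₀ (α τ) * deriv α τ) τ := hωτ.comp τ hατ
    exact hcomp.congr_of_eventuallyEq
      (Filter.eventuallyEq_of_mem (hUopen.mem_nhds hτ) (fun y hy => hAω y hy))
  -- the function g with E = g ∘ α on U
  set g : ℂ → ℂ := fun z => (1 - 2 * z) * ω₀ z ^ 2
      + 2 * (r : ℂ) * (z * (1 - z) * (ω₀ z * deriv ω₀ z)) with hg
  have hEg : ∀ τ ∈ U, E τ = g (α τ) := by
    intro τ hτ
    have hA' : deriv A τ = deriv ω₀ (α τ) * deriv α τ := (hchain τ hτ).deriv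
    have h1 : (1 / (2 * (Real.pi : ℂ) * Complex.I)) * deriv A τ
        = deriv ω₀ (α τ) * (α τ * (1 - α τ) * (A τ) ^ 2) := by
      rw [hA', ← hrel τ hτ]; ring
    have hAτ : A τ = ω₀ (α τ) := hAω τ hτ
    have hAne' : A τ ≠ 0 := hAne τ hτ
    rw [hE]
    simp only [hg]
    rw [h1, hAτ]
    rw [hAτ] at hAne'
    field_simp
  -- now the main computation at a point
  intro τ hτ
  have hx : α τ ∈ W := hWsub ⟨τ, hτ, rfl⟩
  have hαd : HasDerivAt α (deriv α τ) τ :=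
    (hα.differentiableAt (hUopen.mem_nhds hτ)).hasDerivAt
  have hωan : AnalyticOnNhd ℂ ω₀ W := hω₀.analyticOnNhd hWopen
  have hdω : DifferentiableOn ℂ (deriv ω₀) W := hωan.deriv.differentiableOn
  have hωd : HasDerivAt ω₀ (deriv ω₀ (α τ)) (α τ) :=
    (hω₀.differentiableAt (hWopen.mem_nhds hx)).hasDerivAt
  have hωd2 : HasDerivAt (deriv ω₀) (deriv (deriv ω₀) (α τ)) (α τ) :=
    (hdω.differentiableAt (hWopen.mem_nhds hx)).hasDerivAt
  -- derivative of g at α τ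
  have h12 : HasDerivAt (fun z : ℂ => 1 - 2 * z) (-2) (α τ) := by
    simpa using ((hasDerivAt_id (α τ)).const_mul (2 : ℂ)).const_sub 1
  have hsq : HasDerivAt (fun z => ω₀ z ^ 2) (2 * ω₀ (α τ) * deriv ω₀ (α τ)) (α τ) := by
    have := hωd.fun_pow 2
    simpa using this
  have h3 : HasDerivAt (fun z : ℂ => z * (1 - z)) (1 - 2 * α τ) (α τ) := by
    have := (hasDerivAt_id (α τ)).mul ((hasDerivAt_id (α τ)).const_sub 1)
    refine this.congr_deriv ?_
    simp; ring
  have h4 : HasDerivAt (fun z => ω₀ z * deriv ω₀ z)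
      (deriv ω₀ (α τ) * deriv ω₀ (α τ) + ω₀ (α τ) * deriv (deriv ω₀) (α τ)) (α τ) :=
    hωd.mul hωd2
  have hgd : HasDerivAt g
      ((-2 * ω₀ (α τ) ^ 2 + (1 - 2 * α τ) * (2 * ω₀ (α τ) * deriv ω₀ (α τ)))
        + 2 * (r : ℂ) * ((1 - 2 * α τ) * (ω₀ (α τ) * deriv ω₀ (α τ))
          + α τ * (1 - α τ) * (deriv ω₀ (α τ) * deriv ω₀ (α τ)
            + ω₀ (α τ) * deriv (deriv ω₀) (α τ)))) (α τ) := by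
    exact (h12.mul hsq).add ((h3.mul h4).const_mul (2 * (r : ℂ)))
  -- E has that derivative composed with α
  have hEd : HasDerivAt E
      (((-2 * ω₀ (α τ) ^ 2 + (1 - 2 * α τ) * (2 * ω₀ (α τ) * deriv ω₀ (α τ)))
        + 2 * (r : ℂ) * ((1 - 2 * α τ) * (ω₀ (α τ) * deriv ω₀ (α τ))
          + α τ * (1 - α τ) * (deriv ω₀ (α τ) * deriv ω₀ (α τ)
            + ω₀ (α τ) * deriv (deriv ω₀) (α τ)))) * deriv α τ) τ := by
    have hcomp := hgd.comp τ hαd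
    exact hcomp.congr_of_eventuallyEq
      (Filter.eventuallyEq_of_mem (hUopen.mem_nhds hτ) (fun y hy => hEg y hy))
  rw [hEd.deriv, hEg τ hτ]
  have hAτ : A τ = ω₀ (α τ) := hAω τ hτ
  have hrel' : (1 / (2 * (Real.pi : ℂ) * Complex.I)) * deriv α τ
      = α τ * (1 - α τ) * (ω₀ (α τ)) ^ 2 := by rw [hrel τ hτ, hAτ]
  have hODE := hω₀eq (α τ) hx
  rw [hAτ]
  simp only [hg]
  rw [show (1 / (2 * (Real.pi : ℂ) * Complex.I)) *
      (((-2 * ω₀ (α τ) ^ 2 + (1 - 2 * α τ) * (2 * ω₀ (α τ) * deriv ω₀ (α τ)))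
        + 2 * (r : ℂ) * ((1 - 2 * α τ) * (ω₀ (α τ) * deriv ω₀ (α τ))
          + α τ * (1 - α τ) * (deriv ω₀ (α τ) * deriv ω₀ (α τ)
            + ω₀ (α τ) * deriv (deriv ω₀) (α τ)))) * deriv α τ)
      = ((-2 * ω₀ (α τ) ^ 2 + (1 - 2 * α τ) * (2 * ω₀ (α τ) * deriv ω₀ (α τ)))
        + 2 * (r : ℂ) * ((1 - 2 * α τ) * (ω₀ (α τ) * deriv ω₀ (α τ))
          + α τ * (1 - α τ) * (deriv ω₀ (α τ) * deriv ω₀ (α τ)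
            + ω₀ (α τ) * deriv (deriv ω₀) (α τ))))
        * ((1 / (2 * (Real.pi : ℂ) * Complex.I)) * deriv α τ) from by ring,
    hrel']
  have hr1 : (r : ℂ) ^ 2 * ((1 / (r : ℂ)) * (1 - 1 / (r : ℂ))) = (r : ℂ) - 1 := by
    field_simp
  have hODE2 : (r : ℂ) ^ 2 * (α τ * (1 - α τ) * deriv (deriv ω₀) (α τ))
      + (r : ℂ) ^ 2 * ((1 - 2 * α τ) * deriv ω₀ (α τ))
      - ((r : ℂ) - 1) * ω₀ (α τ) = 0 := by
    linear_combination ((r : ℂ) ^ 2) * hODE + ω₀ (α τ) * hr1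
  have h2r : (2 * (r : ℂ)) ≠ 0 := mul_ne_zero two_ne_zero hrC
  rw [one_div_mul_eq_div, eq_div_iff h2r]
  linear_combination (4 * α τ * (1 - α τ) * ω₀ (α τ) ^ 3) * hODE2
end

section
/- Assume Setting (★): U ⊆ ℂ is a nonempty connected open set, r is a positive integer, α : U → ℂ∖{0,1} is holomorphic, A : U → ℂ is holomorphic and nowhere vanishing, (1/2πi)α′ = α(1−α)A² on U, and A = ω₀ ∘ α for some holomorphic solution ω₀ of α(1−α)ω₀″ + (1−2α)ω₀′ − (1/r)(1−1/r)ω₀ = 0 on an open set containing α(U). Define E := (1−2α)A² + 2r·(∂_τA)/A, and let B, C : U → ℂ be holomorphic functions with B^r = (1−α)·A^r and C^r = α·A^r. Then on U: ∂_τA = (1/2r)·A·(E + (2α−1)A²) = (1/2r)·A·(E + ((C^r − B^r)/A^r)·A²), ∂_τB = (1/2r)·B·(E − A²), and ∂_τC = (1/2r)·C·(E + A²). -/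
open Complex Filter Topology

/-- In Setting (★) (with `r` a positive integer), with
`E := (1−2α)A² + 2r·(∂_τA)/A` and holomorphic `B, C` satisfying `Bʳ = (1−α)Aʳ`,
`Cʳ = αAʳ` on `U`, one has on `U`:
`∂_τA = (1/2r)·A·(E + (2α−1)A²) = (1/2r)·A·(E + ((Cʳ−Bʳ)/Aʳ)A²)`,
`∂_τB = (1/2r)·B·(E − A²)` and `∂_τC = (1/2r)·C·(E + A²)`. -/
theorem stmt_3 (U : Set ℂ) (hUopen : IsOpen U) (hUconn : IsConnected U)
    (r : ℕ) (hr : 0 < r)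
    (α A : ℂ → ℂ)
    (hα : DifferentiableOn ℂ α U) (hα01 : ∀ τ ∈ U, α τ ≠ 0 ∧ α τ ≠ 1)
    (hA : DifferentiableOn ℂ A U) (hAne : ∀ τ ∈ U, A τ ≠ 0)
    (hrel : ∀ τ ∈ U,
      (1 / (2 * (Real.pi : ℂ) * Complex.I)) * deriv α τ = α τ * (1 - α τ) * (A τ) ^ 2)
    (ω₀ : ℂ → ℂ) (W : Set ℂ) (hWopen : IsOpen W) (hWsub : α '' U ⊆ W)
    (hω₀ : DifferentiableOn ℂ ω₀ W)
    (hω₀eq : ∀ z ∈ W,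
      z * (1 - z) * deriv (deriv ω₀) z + (1 - 2 * z) * deriv ω₀ z
        - (1 / (r : ℂ)) * (1 - 1 / (r : ℂ)) * ω₀ z = 0)
    (hAω : ∀ τ ∈ U, A τ = ω₀ (α τ))
    (E : ℂ → ℂ)
    (hE : E = fun τ => (1 - 2 * α τ) * (A τ) ^ 2
      + 2 * (r : ℂ) * ((1 / (2 * (Real.pi : ℂ) * Complex.I)) * deriv A τ) / (A τ))
    (B C : ℂ → ℂ)
    (hB : DifferentiableOn ℂ B U) (hC : DifferentiableOn ℂ C U)
    (hBr : ∀ τ ∈ U, (B τ) ^ r = (1 - α τ) * (A τ) ^ r)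
    (hCr : ∀ τ ∈ U, (C τ) ^ r = α τ * (A τ) ^ r) :
    ∀ τ ∈ U,
      (1 / (2 * (Real.pi : ℂ) * Complex.I)) * deriv A τ
        = (1 / (2 * (r : ℂ))) * A τ * (E τ + (2 * α τ - 1) * (A τ) ^ 2) ∧
      (1 / (2 * (Real.pi : ℂ) * Complex.I)) * deriv A τ
        = (1 / (2 * (r : ℂ))) * A τ *
            (E τ + (((C τ) ^ r - (B τ) ^ r) / (A τ) ^ r) * (A τ) ^ 2) ∧
      (1 / (2 * (Real.pi : ℂ) * Complex.I)) * deriv B τ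
        = (1 / (2 * (r : ℂ))) * B τ * (E τ - (A τ) ^ 2) ∧
      (1 / (2 * (Real.pi : ℂ) * Complex.I)) * deriv C τ
        = (1 / (2 * (r : ℂ))) * C τ * (E τ + (A τ) ^ 2) := by
  intro τ hτ
  obtain ⟨m, rfl⟩ : ∃ m, r = m + 1 := ⟨r - 1, (Nat.succ_pred_eq_of_pos hr).symm⟩
  have hτU := hUopen.mem_nhds hτ
  have hπ : (2 * (Real.pi : ℂ) * Complex.I) ≠ 0 := by
    simp [Real.pi_ne_zero, Complex.I_ne_zero, Complex.ofReal_ne_zero]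
  have hAτ := hAne τ hτ
  have hα0 := (hα01 τ hτ).1
  have hα1 : 1 - α τ ≠ 0 := sub_ne_zero.mpr (Ne.symm (hα01 τ hτ).2)
  have hm : ((m : ℂ) + 1) ≠ 0 := Nat.cast_add_one_ne_zero m
  have hBne : B τ ≠ 0 := by
    intro h
    have hb := hBr τ hτ
    rw [h, zero_pow (Nat.succ_ne_zero m)] at hb
    exact (mul_ne_zero hα1 (pow_ne_zero _ hAτ)) hb.symm
  have hCne : C τ ≠ 0 := by
    intro h
    have hb := hCr τ hτ
    rw [h, zero_pow (Nat.succ_ne_zero m)] at hb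
    exact (mul_ne_zero hα0 (pow_ne_zero _ hAτ)) hb.symm
  have hαd := (hα τ hτ).differentiableAt hτU
  have hAd := (hA τ hτ).differentiableAt hτU
  have hBd := (hB τ hτ).differentiableAt hτU
  have hCd := (hC τ hτ).differentiableAt hτU
  have hEτ : E τ = (1 - 2 * α τ) * (A τ) ^ 2
      + 2 * ((m + 1 : ℕ) : ℂ) * ((1 / (2 * (Real.pi : ℂ) * Complex.I)) * deriv A τ) / (A τ) := by
    rw [hE]
  have hu : (1 / (2 * (Real.pi : ℂ) * Complex.I)) * deriv A τ
      = (1 / (2 * ((m + 1 : ℕ) : ℂ))) * A τ * (E τ + (2 * α τ - 1) * (A τ) ^ 2) := by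
    rw [hEτ]
    push_cast
    field_simp
    ring
  have hα2 : deriv α τ = 2 * (Real.pi : ℂ) * Complex.I * (α τ * (1 - α τ) * A τ ^ 2) := by
    have hα' := hrel τ hτ
    field_simp at hα'
    linear_combination hα'
  have hBpow : HasDerivAt (fun t => B t ^ (m + 1))
      (((m : ℂ) + 1) * B τ ^ m * deriv B τ) τ := by
    have h := hBd.hasDerivAt.pow (m + 1)
    simp only [Nat.cast_add, Nat.cast_one, Nat.add_sub_cancel] at h
    exact h
  have hRHSB : HasDerivAt (fun t => (1 - α t) * A t ^ (m + 1))
      (-(deriv α τ) * A τ ^ (m + 1)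
        + (1 - α τ) * (((m : ℂ) + 1) * A τ ^ m * deriv A τ)) τ := by
    have h1 : HasDerivAt (fun t => 1 - α t) (-(deriv α τ)) τ := by
      have h := (hasDerivAt_const τ (1 : ℂ)).sub hαd.hasDerivAt
      simp only [zero_sub] at h
      exact h
    have h2 := hAd.hasDerivAt.pow (m + 1)
    have h := h1.mul h2
    simp only [Nat.cast_add, Nat.cast_one, Nat.add_sub_cancel] at h
    exact h
  have hBkey : ((m : ℂ) + 1) * B τ ^ m * deriv B τ
      = -(deriv α τ) * A τ ^ (m + 1)
        + (1 - α τ) * (((m : ℂ) + 1) * A τ ^ m * deriv A τ) := by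
    refine hBpow.unique (hRHSB.congr_of_eventuallyEq ?_)
    filter_upwards [hτU] with t ht using hBr t ht
  have hCpow : HasDerivAt (fun t => C t ^ (m + 1))
      (((m : ℂ) + 1) * C τ ^ m * deriv C τ) τ := by
    have h := hCd.hasDerivAt.pow (m + 1)
    simp only [Nat.cast_add, Nat.cast_one, Nat.add_sub_cancel] at h
    exact h
  have hRHSC : HasDerivAt (fun t => α t * A t ^ (m + 1))
      ((deriv α τ) * A τ ^ (m + 1)
        + α τ * (((m : ℂ) + 1) * A τ ^ m * deriv A τ)) τ := by
    have h2 := hAd.hasDerivAt.pow (m + 1)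
    have h := hαd.hasDerivAt.mul h2
    simp only [Nat.cast_add, Nat.cast_one, Nat.add_sub_cancel] at h
    exact h
  have hCkey : ((m : ℂ) + 1) * C τ ^ m * deriv C τ
      = (deriv α τ) * A τ ^ (m + 1)
        + α τ * (((m : ℂ) + 1) * A τ ^ m * deriv A τ) := by
    refine hCpow.unique (hRHSC.congr_of_eventuallyEq ?_)
    filter_upwards [hτU] with t ht using hCr t ht
  refine ⟨hu, ?_, ?_, ?_⟩
  · rw [hBr τ hτ, hCr τ hτ, hu]
    field_simp
    ring
  · have hb := hBr τ hτ
    rw [hEτ]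
    apply mul_left_cancel₀ (pow_ne_zero m hBne)
    push_cast
    field_simp
    apply mul_left_cancel₀ (pow_ne_zero m hBne)
    linear_combination A τ * hBkey - A τ ^ (m + 2) * hα2
      - ((Real.pi : ℂ) * Complex.I * (1 - 2 * α τ) * A τ ^ 3 + ((m : ℂ) + 1) * deriv A τ
          - (Real.pi : ℂ) * Complex.I * A τ ^ 3) * hb
  · have hc := hCr τ hτ
    rw [hEτ]
    apply mul_left_cancel₀ (pow_ne_zero m hCne)
    push_cast
    field_simp
    apply mul_left_cancel₀ (pow_ne_zero m hCne)
    linear_combination A τ * hCkey + A τ ^ (m + 2) * hα2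
      - ((Real.pi : ℂ) * Complex.I * (1 - 2 * α τ) * A τ ^ 3 + ((m : ℂ) + 1) * deriv A τ
          + (Real.pi : ℂ) * Complex.I * A τ ^ 3) * hc
end

section
/- Let V ⊆ ℂ∖{0,1} be a nonempty connected open set, let c₁, c₂, c₃, c₄ ∈ ℂ with c₁ + c₂ + c₃ + c₄ = 2, and let Π : V → ℂ⁴ be holomorphic such that every component of Π solves the fourth-order equation θ⁴f = α(θ+c₁)(θ+c₂)(θ+c₃)(θ+c₄)f, where θ = α·d/dα. Let Q : ℂ⁴ × ℂ⁴ → ℂ be an alternating bilinear form, and suppose Q(Π(α), (θΠ)(α)) = 0 and Q(Π(α), (θ²Π)(α)) = 0 for all α ∈ V. Then the function (1 − α)·Q(Π(α), (θ³Π)(α)) is constant on V. In particular, if Q(Π(αₙ), (θ³Π)(αₙ)) → κ along some sequence αₙ → 0 in V, then Q(Π, θ³Π) = κ/(1−α) on V, so that the Yukawa coupling C_{ααα} := α⁻³·Q(Π, θ³Π) equals κ/(α³(1−α)). -/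
open Complex Filter Topology

/-- The Euler operator `θf(α) = α·f′(α)`. -/
noncomputable def euler (f : ℂ → ℂ) : ℂ → ℂ := fun α => α * deriv f α

/-- The shifted Euler operator `(θ + c)f`. -/
noncomputable def shiftEuler (c : ℂ) (f : ℂ → ℂ) : ℂ → ℂ := fun α => euler f α + c * f α

/-- The Euler operator applied componentwise to a `ℂ⁴`-valued function. -/
noncomputable def eulerVec (f : ℂ → Fin 4 → ℂ) : ℂ → Fin 4 → ℂ :=
  fun α i => euler (fun β => f β i) α

lemma euler_congr {u v : ℂ → ℂ} {α : ℂ} (h : u =ᶠ[nhds α] v) : euler u α = euler v α := by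
  unfold euler; rw [h.deriv_eq]

lemma euler_analytic {V : Set ℂ} (hV : IsOpen V) {g : ℂ → ℂ}
    (hg : AnalyticOnNhd ℂ g V) : AnalyticOnNhd ℂ (euler g) V := by
  intro α hα
  exact (analyticAt_id).mul (hg.deriv_of_isOpen hV α hα)

lemma euler_comb2 {u v : ℂ → ℂ} {α : ℂ} (hu : DifferentiableAt ℂ u α)
    (hv : DifferentiableAt ℂ v α) (c : ℂ) :
    euler (fun β => u β + c * v β) α = euler u α + c * euler v α := by
  unfold euler
  rw [HasDerivAt.deriv (f := fun β => u β + c * v β) (hu.hasDerivAt.add ((hv.hasDerivAt).const_mul c))]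
  ring

lemma euler_comb3 {u v w : ℂ → ℂ} {α : ℂ} (hu : DifferentiableAt ℂ u α)
    (hv : DifferentiableAt ℂ v α) (hw : DifferentiableAt ℂ w α) (b c : ℂ) :
    euler (fun β => u β + b * v β + c * w β) α
      = euler u α + b * euler v α + c * euler w α := by
  unfold euler
  rw [HasDerivAt.deriv (f := fun β => u β + b * v β + c * w β) ((hu.hasDerivAt.add ((hv.hasDerivAt).const_mul b)).add
    ((hw.hasDerivAt).const_mul c))]
  ring

lemma euler_comb4 {u v w z : ℂ → ℂ} {α : ℂ} (hu : DifferentiableAt ℂ u α)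
    (hv : DifferentiableAt ℂ v α) (hw : DifferentiableAt ℂ w α)
    (hz : DifferentiableAt ℂ z α) (b c d : ℂ) :
    euler (fun β => u β + b * v β + c * w β + d * z β) α
      = euler u α + b * euler v α + c * euler w α + d * euler z α := by
  unfold euler
  rw [HasDerivAt.deriv (f := fun β => u β + b * v β + c * w β + d * z β) (((hu.hasDerivAt.add ((hv.hasDerivAt).const_mul b)).add
    ((hw.hasDerivAt).const_mul c)).add ((hz.hasDerivAt).const_mul d))]
  ring

lemma shift_expand {V : Set ℂ} (hV : IsOpen V) {g : ℂ → ℂ}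
    (hg : AnalyticOnNhd ℂ g V) (c₁ c₂ c₃ c₄ : ℂ) {α : ℂ} (hα : α ∈ V) :
    shiftEuler c₁ (shiftEuler c₂ (shiftEuler c₃ (shiftEuler c₄ g))) α =
      euler (euler (euler (euler g))) α
      + (c₁+c₂+c₃+c₄) * euler (euler (euler g)) α
      + (c₁*c₂+c₁*c₃+c₁*c₄+c₂*c₃+c₂*c₄+c₃*c₄) * euler (euler g) α
      + (c₁*c₂*c₃+c₁*c₂*c₄+c₁*c₃*c₄+c₂*c₃*c₄) * euler g α
      + (c₁*c₂*c₃*c₄) * g α := by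
  have hg1 := euler_analytic hV hg
  have hg2 := euler_analytic hV hg1
  have hg3 := euler_analytic hV hg2
  have hL2 : ∀ β ∈ V, shiftEuler c₃ (shiftEuler c₄ g) β
      = euler (euler g) β + (c₃+c₄) * euler g β + (c₃*c₄) * g β := by
    intro β hβ
    have hr : shiftEuler c₃ (shiftEuler c₄ g) β
        = euler (fun γ => euler g γ + c₄ * g γ) β + c₃ * (euler g β + c₄ * g β) := rfl
    rw [hr, euler_comb2 (hg1 β hβ).differentiableAt (hg β hβ).differentiableAt c₄]
    ring
  have hL3 : ∀ β ∈ V, shiftEuler c₂ (shiftEuler c₃ (shiftEuler c₄ g)) β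
      = euler (euler (euler g)) β + (c₂+c₃+c₄) * euler (euler g) β
        + (c₂*c₃+c₂*c₄+c₃*c₄) * euler g β + (c₂*c₃*c₄) * g β := by
    intro β hβ
    have heq : shiftEuler c₃ (shiftEuler c₄ g) =ᶠ[nhds β]
        fun γ => euler (euler g) γ + (c₃+c₄) * euler g γ + (c₃*c₄) * g γ := by
      filter_upwards [hV.mem_nhds hβ] with γ hγ using hL2 γ hγ
    show euler (shiftEuler c₃ (shiftEuler c₄ g)) β + c₂ * (shiftEuler c₃ (shiftEuler c₄ g) β) = _
    rw [euler_congr heq, hL2 β hβ,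
      euler_comb3 (hg2 β hβ).differentiableAt (hg1 β hβ).differentiableAt
        (hg β hβ).differentiableAt (c₃+c₄) (c₃*c₄)]
    ring
  have heq3 : shiftEuler c₂ (shiftEuler c₃ (shiftEuler c₄ g)) =ᶠ[nhds α]
      fun γ => euler (euler (euler g)) γ + (c₂+c₃+c₄) * euler (euler g) γ
        + (c₂*c₃+c₂*c₄+c₃*c₄) * euler g γ + (c₂*c₃*c₄) * g γ := by
    filter_upwards [hV.mem_nhds hα] with γ hγ using hL3 γ hγ
  show euler (shiftEuler c₂ (shiftEuler c₃ (shiftEuler c₄ g))) α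
      + c₁ * (shiftEuler c₂ (shiftEuler c₃ (shiftEuler c₄ g)) α) = _
  rw [euler_congr heq3, hL3 α hα,
    euler_comb4 (hg3 α hα).differentiableAt (hg2 α hα).differentiableAt
      (hg1 α hα).differentiableAt (hg α hα).differentiableAt
      (c₂+c₃+c₄) (c₂*c₃+c₂*c₄+c₃*c₄) (c₂*c₃*c₄)]
  ring

/-- Let `P : V → ℂ⁴` be a holomorphic period vector on a nonempty
connected open `V ⊆ ℂ∖{0,1}` all of whose components solve the fourth-order equation
`θ⁴f = α(θ+c₁)(θ+c₂)(θ+c₃)(θ+c₄)f` with `c₁+c₂+c₃+c₄ = 2`, and let `Q` be an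
alternating bilinear form with `Q(P, θP) = 0 = Q(P, θ²P)` on `V` (Griffiths
transversality).  Then `(1−α)·Q(P, θ³P)` is constant on `V`; if moreover
`Q(P, θ³P) → κ` along a sequence tending to `0` in `V`, then `Q(P, θ³P) = κ/(1−α)`
on `V` and the Yukawa coupling `α⁻³·Q(P, θ³P)` equals `κ/(α³(1−α))`. -/
theorem stmt_6 (V : Set ℂ) (hVopen : IsOpen V) (hVconn : IsConnected V)
    (hV01 : ∀ α ∈ V, α ≠ 0 ∧ α ≠ 1)
    (c₁ c₂ c₃ c₄ : ℂ) (hc : c₁ + c₂ + c₃ + c₄ = 2)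
    (P : ℂ → Fin 4 → ℂ)
    (hP : ∀ i, DifferentiableOn ℂ (fun α => P α i) V)
    (hode : ∀ i, ∀ α ∈ V,
      euler (euler (euler (euler (fun β => P β i)))) α =
        α * shiftEuler c₁ (shiftEuler c₂ (shiftEuler c₃ (shiftEuler c₄ (fun β => P β i)))) α)
    (Q : (Fin 4 → ℂ) →ₗ[ℂ] (Fin 4 → ℂ) →ₗ[ℂ] ℂ)
    (hQalt : ∀ x, Q x x = 0)
    (hQ1 : ∀ α ∈ V, Q (P α) (eulerVec P α) = 0)
    (hQ2 : ∀ α ∈ V, Q (P α) (eulerVec (eulerVec P) α) = 0) :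
    (∃ k : ℂ, ∀ α ∈ V,
      (1 - α) * Q (P α) (eulerVec (eulerVec (eulerVec P)) α) = k) ∧
    ∀ (κ : ℂ) (a : ℕ → ℂ), (∀ n, a n ∈ V) →
      Tendsto a atTop (𝓝 0) →
      Tendsto (fun n => Q (P (a n)) (eulerVec (eulerVec (eulerVec P)) (a n))) atTop (𝓝 κ) →
      ∀ α ∈ V,
        Q (P α) (eulerVec (eulerVec (eulerVec P)) α) = κ / (1 - α) ∧
        (α ^ 3)⁻¹ * Q (P α) (eulerVec (eulerVec (eulerVec P)) α)
          = κ / (α ^ 3 * (1 - α)) := by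
  classical
  set f₁ := eulerVec P with hf₁
  set f₂ := eulerVec f₁ with hf₂
  set f₃ := eulerVec f₂ with hf₃
  set f₄ := eulerVec f₃ with hf₄
  -- analyticity of components
  have hA0 : ∀ i, AnalyticOnNhd ℂ (fun α => P α i) V := fun i => (hP i).analyticOnNhd hVopen
  have step : ∀ (f : ℂ → Fin 4 → ℂ), (∀ i, AnalyticOnNhd ℂ (fun α => f α i) V) →
      ∀ i, AnalyticOnNhd ℂ (fun α => eulerVec f α i) V := by
    intro f hf i
    exact euler_analytic hVopen (hf i)
  have hA1 : ∀ i, AnalyticOnNhd ℂ (fun α => f₁ α i) V := step P hA0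
  have hA2 : ∀ i, AnalyticOnNhd ℂ (fun α => f₂ α i) V := step f₁ hA1
  have hA3 : ∀ i, AnalyticOnNhd ℂ (fun α => f₃ α i) V := step f₂ hA2
  -- continuous bilinear version of Q
  let Q' : (Fin 4 → ℂ) →ₗ[ℂ] ((Fin 4 → ℂ) →L[ℂ] ℂ) :=
    { toFun := fun x => LinearMap.toContinuousLinearMap (Q x)
      map_add' := fun x y => by ext z; simp
      map_smul' := fun c x => by ext z; simp }
  let B : (Fin 4 → ℂ) →L[ℂ] ((Fin 4 → ℂ) →L[ℂ] ℂ) := LinearMap.toContinuousLinearMap Q'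
  have hB : ∀ x y, B x y = Q x y := fun x y => rfl
  -- componentwise derivative of vector functions
  have hvec : ∀ (f : ℂ → Fin 4 → ℂ), (∀ i, AnalyticOnNhd ℂ (fun α => f α i) V) →
      ∀ α ∈ V, HasDerivAt f (fun i => α⁻¹ * eulerVec f α i) α := by
    intro f hf α hα
    have hα0 : α ≠ 0 := (hV01 α hα).1
    rw [hasDerivAt_pi]
    intro i
    have hd : DifferentiableAt ℂ (fun β => f β i) α := (hf i α hα).differentiableAt
    have he : α⁻¹ * eulerVec f α i = deriv (fun β => f β i) α := by
      simp only [eulerVec, euler]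
      exact inv_mul_cancel_left₀ hα0 _
    exact he ▸ hd.hasDerivAt
  -- derivative of the pairing
  have hQd : ∀ (u v : ℂ → Fin 4 → ℂ), (∀ i, AnalyticOnNhd ℂ (fun α => u α i) V) →
      (∀ i, AnalyticOnNhd ℂ (fun α => v α i) V) → ∀ α ∈ V,
      HasDerivAt (fun β => Q (u β) (v β))
        (α⁻¹ * (Q (eulerVec u α) (v α) + Q (u α) (eulerVec v α))) α := by
    intro u v hu hv α hα
    have h1 := hvec u hu α hα
    have h2 := hvec v hv α hα
    have hcc : HasDerivAt (fun β => B (u β)) (B (fun i => α⁻¹ * eulerVec u α i)) α :=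
      B.hasFDerivAt.comp_hasDerivAt α h1
    have h3 := hcc.clm_apply h2
    have hkey : (B (fun i => α⁻¹ * eulerVec u α i)) (v α)
        + (B (u α)) (fun i => α⁻¹ * eulerVec v α i)
        = α⁻¹ * (Q (eulerVec u α) (v α) + Q (u α) (eulerVec v α)) := by
      have e1 : (fun i => α⁻¹ * eulerVec u α i) = α⁻¹ • eulerVec u α := rfl
      have e2 : (fun i => α⁻¹ * eulerVec v α i) = α⁻¹ • eulerVec v α := rfl
      rw [e1, e2, map_smul, map_smul]
      simp only [ContinuousLinearMap.coe_smul', Pi.smul_apply, smul_eq_mul, hB]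
      ring
    rw [hkey] at h3
    exact h3.congr_of_eventuallyEq
      (Eventually.of_forall fun β => (hB (u β) (v β)).symm)
  have hWd : ∀ α ∈ V, HasDerivAt (fun β => Q (P β) (f₃ β))
      (α⁻¹ * (Q (f₁ α) (f₃ α) + Q (P α) (f₄ α))) α := by
    intro α hα
    exact hQd P f₃ hA0 hA3 α hα
  -- first Griffiths consequence
  have hR1 : ∀ α ∈ V, Q (f₁ α) (f₂ α) = - Q (P α) (f₃ α) := by
    intro α hα
    have hα0 : α ≠ 0 := (hV01 α hα).1
    have hd := hQd P f₂ hA0 hA2 α hα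
    have h0 : HasDerivAt (fun β => Q (P β) (f₂ β)) 0 α := by
      have heq : (fun β => Q (P β) (f₂ β)) =ᶠ[nhds α] fun _ => (0:ℂ) := by
        filter_upwards [hVopen.mem_nhds hα] with β hβ using hQ2 β hβ
      exact (hasDerivAt_const α (0:ℂ)).congr_of_eventuallyEq heq
    have hu := hd.unique h0
    have hu' : Q (f₁ α) (f₂ α) + Q (P α) (f₃ α) = 0 := by
      field_simp at hu
      rw [mul_zero] at hu
      exact hu
    linear_combination hu'
  -- ODE consequence
  have hR3 : ∀ α ∈ V, Q (P α) (f₄ α)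
      = α * (Q (P α) (f₄ α) + 2 * Q (P α) (f₃ α)) := by
    intro α hα
    have hexp : f₄ α = α • (f₄ α + (c₁+c₂+c₃+c₄) • f₃ α
        + (c₁*c₂+c₁*c₃+c₁*c₄+c₂*c₃+c₂*c₄+c₃*c₄) • f₂ α
        + (c₁*c₂*c₃+c₁*c₂*c₄+c₁*c₃*c₄+c₂*c₃*c₄) • f₁ α
        + (c₁*c₂*c₃*c₄) • P α) := by
      funext i
      have h1 := hode i α hα
      have h2 := shift_expand hVopen (hA0 i) c₁ c₂ c₃ c₄ hα
      have e4 : f₄ α i = euler (euler (euler (euler (fun β => P β i)))) α := rfl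
      have e3 : f₃ α i = euler (euler (euler (fun β => P β i))) α := rfl
      have e2 : f₂ α i = euler (euler (fun β => P β i)) α := rfl
      have e1 : f₁ α i = euler (fun β => P β i) α := rfl
      simp only [Pi.smul_apply, Pi.add_apply, smul_eq_mul]
      rw [h2] at h1
      rw [e4, e3, e2, e1]
      linear_combination h1
    have hQe := congrArg (fun v => Q (P α) v) hexp
    simp only [map_add, map_smul, smul_eq_mul] at hQe
    rw [hQ1 α hα, hQ2 α hα, hQalt, hc] at hQe
    linear_combination hQe
  -- derivative of (1-α)·W is zero on V
  have hG0 : ∀ α ∈ V, HasDerivAt (fun β => (1-β) * Q (P β) (f₃ β)) 0 α := by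
    intro α hα
    obtain ⟨hα0, hα1⟩ := hV01 α hα
    -- second Griffiths consequence
    have hd2 := hQd f₁ f₂ hA1 hA2 α hα
    have hneg : HasDerivAt (fun β => Q (f₁ β) (f₂ β))
        (-(α⁻¹ * (Q (f₁ α) (f₃ α) + Q (P α) (f₄ α)))) α := by
      have heq : (fun β => Q (f₁ β) (f₂ β)) =ᶠ[nhds α]
          fun β => -(Q (P β) (f₃ β)) := by
        filter_upwards [hVopen.mem_nhds hα] with β hβ using hR1 β hβ
      exact ((hWd α hα).neg).congr_of_eventuallyEq heq
    have hu := hd2.unique hneg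
    rw [hQalt] at hu
    have e2' : 2 * Q (f₁ α) (f₃ α) + Q (P α) (f₄ α) = 0 := by
      field_simp at hu
      linear_combination hu
    have e3 := hR3 α hα
    have hzero : -1 * Q (P α) (f₃ α)
        + (1 - α) * (α⁻¹ * (Q (f₁ α) (f₃ α) + Q (P α) (f₄ α))) = 0 := by
      field_simp
      linear_combination (1 - α) / 2 * e2' + e3 / 2
    have hmul := ((hasDerivAt_id α).const_sub 1).mul (hWd α hα)
    refine hmul.congr_deriv ?_
    simp only [id_eq]
    linear_combination hzero
  -- (1-α)·W is constant on V
  have hGconst : ∀ α ∈ V, ∀ β ∈ V,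
      (1-α) * Q (P α) (f₃ α) = (1-β) * Q (P β) (f₃ β) := by
    have hloc : ∀ γ ∈ V, ∀ᶠ δ in nhds γ,
        (1-δ) * Q (P δ) (f₃ δ) = (1-γ) * Q (P γ) (f₃ γ) := by
      intro γ hγ
      obtain ⟨ε, hε, hball⟩ := Metric.isOpen_iff.mp hVopen γ hγ
      have hconst : ∀ δ ∈ Metric.ball γ ε,
          (1-δ) * Q (P δ) (f₃ δ) = (1-γ) * Q (P γ) (f₃ γ) := by
        intro δ hδ
        refine Convex.is_const_of_fderivWithin_eq_zero (𝕜 := ℂ)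
          (f := fun δ => (1-δ) * Q (P δ) (f₃ δ)) (convex_ball γ ε) ?_ ?_ hδ
          (Metric.mem_ball_self hε)
        · intro x hx
          exact ((hG0 x (hball hx)).differentiableAt).differentiableWithinAt
        · intro x hx
          rw [fderivWithin_of_isOpen Metric.isOpen_ball hx]
          have h0 : HasFDerivAt (fun β => (1-β) * Q (P β) (f₃ β)) (0 : ℂ →L[ℂ] ℂ) x := by
            have h := (hG0 x (hball hx)).hasFDerivAt
            have : (ContinuousLinearMap.toSpanSingleton ℂ (0:ℂ)) = 0 := by
              ext; simp
            rwa [this] at h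
          exact h0.fderiv
      filter_upwards [Metric.ball_mem_nhds γ hε] with δ hδ using hconst δ hδ
    intro α hα β hβ
    by_contra hne
    set U : Set ℂ := {γ | ∀ᶠ δ in nhds γ, (1-δ) * Q (P δ) (f₃ δ) = (1-α) * Q (P α) (f₃ α)}
      with hU
    set O : Set ℂ := {γ | γ ∈ V ∧ (1-γ) * Q (P γ) (f₃ γ) ≠ (1-α) * Q (P α) (f₃ α)} with hO
    have hUopen : IsOpen U := by
      rw [isOpen_iff_mem_nhds]
      intro γ hγ
      exact hγ.eventually_nhds
    have hOopen : IsOpen O := by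
      rw [isOpen_iff_mem_nhds]
      intro γ hγ
      filter_upwards [hloc γ hγ.1, hVopen.mem_nhds hγ.1] with δ hδ hδV
      exact ⟨hδV, by rw [hδ]; exact hγ.2⟩
    have hcover : V ⊆ U ∪ O := by
      intro γ hγ
      by_cases h : (1-γ) * Q (P γ) (f₃ γ) = (1-α) * Q (P α) (f₃ α)
      · left
        filter_upwards [hloc γ hγ] with δ hδ using hδ.trans h
      · exact Or.inr ⟨hγ, h⟩
    have hUne : (V ∩ U).Nonempty := by
      refine ⟨α, hα, ?_⟩
      filter_upwards [hloc α hα] with δ hδ using hδ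
    have hOne : (V ∩ O).Nonempty := ⟨β, hβ, hβ, fun h => hne h.symm⟩
    obtain ⟨γ, hγV, hγU, hγO⟩ := hVconn.isPreconnected U O hUopen hOopen hcover hUne hOne
    exact hγO.2 hγU.self_of_nhds
  refine ⟨?_, ?_⟩
  · obtain ⟨α₀, hα₀⟩ := hVconn.nonempty
    exact ⟨(1-α₀) * Q (P α₀) (f₃ α₀), fun α hα => hGconst α hα α₀ hα₀⟩
  · intro κ a haV hato hQto α hα
    obtain ⟨hα0, hα1⟩ := hV01 α hα
    have h1α : (1:ℂ) - α ≠ 0 := sub_ne_zero.mpr (Ne.symm hα1)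
    have hk : ∀ n, (1 - a n) * Q (P (a n)) (f₃ (a n)) = (1-α) * Q (P α) (f₃ α) :=
      fun n => hGconst (a n) (haV n) α hα
    have hlim : Tendsto (fun n => (1 - a n) * Q (P (a n)) (f₃ (a n))) atTop (𝓝 κ) := by
      have h1 : Tendsto (fun n => (1:ℂ) - a n) atTop (𝓝 1) := by
        have h := Filter.Tendsto.sub
          (tendsto_const_nhds : Tendsto (fun _ : ℕ => (1:ℂ)) atTop (𝓝 1)) hato
        simpa using h
      have := h1.mul hQto
      simpa using this
    have hkk : (1-α) * Q (P α) (f₃ α) = κ := by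
      have : Tendsto (fun _ : ℕ => (1-α) * Q (P α) (f₃ α)) atTop (𝓝 κ) := by
        exact (tendsto_congr hk).mp hlim
      exact (tendsto_nhds_unique this tendsto_const_nhds).symm
    constructor
    · field_simp
      linear_combination hkk
    · have hW : Q (P α) (f₃ α) = κ / (1-α) := by
        field_simp
        linear_combination hkk
      rw [hW]
      field_simp
end

section
/- Let V ⊆ ℂ∖{0,1} be a nonempty connected open set, c₁, c₂, c₃, c₄ ∈ ℂ, and let ℒ := θ⁴ − α(θ+c₁)(θ+c₂)(θ+c₃)(θ+c₄) with θ = α·d/dα. Let X⁰, t : V → ℂ be holomorphic with ℒX⁰ = 0 and ℒ(X⁰·t) = 0 on V, and with X⁰ and θt nowhere vanishing. Define the derivation 𝒟f := (1−α)·(X⁰·θt)²·θf on holomorphic functions on V. Then the ℂ-subalgebra of holomorphic functions on V generated by α, α⁻¹, (1−α)⁻¹, X⁰, (X⁰)⁻¹, θt, (θt)⁻¹, 𝒟X⁰, 𝒟²X⁰, 𝒟³X⁰, 𝒟(θt) and 𝒟²(θt) is closed under 𝒟. -/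
open Complex Filter Topology

/-- The derivation `𝒟f = (1−α)·(X⁰·θt)²·θf` (the derivative `∂_τ` written in the
`α`-coordinate). -/
noncomputable def Dop (X0 t : ℂ → ℂ) (f : ℂ → ℂ) : ℂ → ℂ :=
  fun α => (1 - α) * (X0 α * (α * deriv t α)) ^ 2 * (α * deriv f α)

/-- The generating set: `α, α⁻¹, (1−α)⁻¹, X⁰, (X⁰)⁻¹, θt, (θt)⁻¹, 𝒟X⁰, 𝒟²X⁰, 𝒟³X⁰,
𝒟(θt), 𝒟²(θt)`. -/
noncomputable def genSet (X0 t : ℂ → ℂ) : Set (ℂ → ℂ) :=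
  {fun α => α, fun α => α⁻¹, fun α => (1 - α)⁻¹, X0, fun α => (X0 α)⁻¹,
   fun α => α * deriv t α, fun α => (α * deriv t α)⁻¹,
   Dop X0 t X0, Dop X0 t (Dop X0 t X0), Dop X0 t (Dop X0 t (Dop X0 t X0)),
   Dop X0 t (fun α => α * deriv t α), Dop X0 t (Dop X0 t (fun α => α * deriv t α))}

namespace Stmt8Aux

/-- The prefactor `u = (1-α)(X⁰ θt)²`, so that `Dop f = u · euler f`. -/
noncomputable def Ufun (X0 t : ℂ → ℂ) : ℂ → ℂ := fun α => (1 - α) * (X0 α * (α * deriv t α)) ^ 2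

/-- constant function -/
def constF (c : ℂ) : ℂ → ℂ := fun _ => c

variable {V : Set ℂ}

lemma deriv_congr_of_eqOn (hVopen : IsOpen V) {f g : ℂ → ℂ} (h : Set.EqOn f g V)
    {α : ℂ} (hα : α ∈ V) : deriv f α = deriv g α :=
  Filter.EventuallyEq.deriv_eq (Filter.eventuallyEq_of_mem (hVopen.mem_nhds hα) h)

lemma diffAt (hVopen : IsOpen V) {f : ℂ → ℂ} (hf : DifferentiableOn ℂ f V) {α : ℂ}
    (hα : α ∈ V) : DifferentiableAt ℂ f α :=
  hf.differentiableAt (hVopen.mem_nhds hα)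

/-- Depth-indexed predicate: `QD n f` means `f` is differentiable on `V`, belongs to `A`,
and its iterated `Dop`-derivatives up to order `n` agree on `V` with elements of `A`. -/
def QD (V : Set ℂ) (A : Subalgebra ℂ (ℂ → ℂ)) (X0 t : ℂ → ℂ) : ℕ → (ℂ → ℂ) → Prop
  | 0, f => DifferentiableOn ℂ f V ∧ f ∈ A
  | (n+1), f => (DifferentiableOn ℂ f V ∧ f ∈ A) ∧
      ∃ F, QD V A X0 t n F ∧ Set.EqOn (Dop X0 t f) F V

variable {A : Subalgebra ℂ (ℂ → ℂ)} {X0 t : ℂ → ℂ}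

lemma QD.obj {n f} (h : QD V A X0 t n f) : DifferentiableOn ℂ f V ∧ f ∈ A := by
  cases n with
  | zero => exact h
  | succ n => exact h.1

lemma qd_down {n f} (h : QD V A X0 t (n+1) f) : QD V A X0 t n f := by
  induction n generalizing f with
  | zero => exact h.1
  | succ n ih =>
    obtain ⟨ho, F, hF, hFe⟩ := h
    exact ⟨ho, F, ih hF, hFe⟩

lemma qd_subj {n f g} (h : f = g) (hq : QD V A X0 t n f) : QD V A X0 t n g := h ▸ hq

lemma qd_constMem (c : ℂ) : constF c ∈ A := by
  have : constF c = (algebraMap ℂ (ℂ → ℂ)) c := rfl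
  rw [this]; exact A.algebraMap_mem c

lemma qd_constD (c : ℂ) {α : ℂ} :
    Ufun X0 t α * (α * deriv (fun _ => c) α) = constF 0 α := by
  rw [deriv_const']; show Ufun X0 t α * (α * 0) = 0; ring

lemma qd_const (n : ℕ) (c : ℂ) : QD V A X0 t n (constF c) := by
  induction n generalizing c with
  | zero => exact ⟨differentiableOn_const c, qd_constMem c⟩
  | succ n ih =>
    exact ⟨⟨differentiableOn_const c, qd_constMem c⟩, constF 0, ih 0,
      fun α hα => qd_constD c⟩

lemma qd_add (hVopen : IsOpen V) {n f g} (hf : QD V A X0 t n f) (hg : QD V A X0 t n g) :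
    QD V A X0 t n (f + g) := by
  induction n generalizing f g with
  | zero => exact ⟨hf.1.add hg.1, A.add_mem hf.2 hg.2⟩
  | succ n ih =>
    obtain ⟨⟨hfd, hfA⟩, F, hFq, hFe⟩ := hf
    obtain ⟨⟨hgd, hgA⟩, G, hGq, hGe⟩ := hg
    refine ⟨⟨hfd.add hgd, A.add_mem hfA hgA⟩, F + G, ih hFq hGq, ?_⟩
    intro α hα
    show Ufun X0 t α * (α * deriv (fun β => f β + g β) α) = (F + G) α
    rw [deriv_fun_add (diffAt hVopen hfd hα) (diffAt hVopen hgd hα)]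
    have h1 : Ufun X0 t α * (α * deriv f α) = F α := hFe hα
    have h2 : Ufun X0 t α * (α * deriv g α) = G α := hGe hα
    show Ufun X0 t α * (α * (deriv f α + deriv g α)) = F α + G α
    rw [← h1, ← h2]; ring

lemma qd_mul (hVopen : IsOpen V) {n f g} (hf : QD V A X0 t n f) (hg : QD V A X0 t n g) :
    QD V A X0 t n (f * g) := by
  induction n generalizing f g with
  | zero => exact ⟨hf.1.mul hg.1, A.mul_mem hf.2 hg.2⟩
  | succ n ih =>
    obtain ⟨⟨hfd, hfA⟩, F, hFq, hFe⟩ := hf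
    obtain ⟨⟨hgd, hgA⟩, G, hGq, hGe⟩ := hg
    have hfn : QD V A X0 t n f := qd_down ⟨⟨hfd, hfA⟩, F, hFq, hFe⟩
    have hgn : QD V A X0 t n g := qd_down ⟨⟨hgd, hgA⟩, G, hGq, hGe⟩
    refine ⟨⟨hfd.mul hgd, A.mul_mem hfA hgA⟩, F * g + f * G,
      qd_add hVopen (ih hFq hgn) (ih hfn hGq), ?_⟩
    intro α hα
    show Ufun X0 t α * (α * deriv (fun β => f β * g β) α) = (F * g + f * G) α
    rw [deriv_fun_mul (diffAt hVopen hfd hα) (diffAt hVopen hgd hα)]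
    have h1 : Ufun X0 t α * (α * deriv f α) = F α := hFe hα
    have h2 : Ufun X0 t α * (α * deriv g α) = G α := hGe hα
    show Ufun X0 t α * (α * (deriv f α * g α + f α * deriv g α)) =
      F α * g α + f α * G α
    rw [← h1, ← h2]; ring

lemma qd_neg (hVopen : IsOpen V) {n f} (hf : QD V A X0 t n f) : QD V A X0 t n (-f) := by
  have h := qd_mul hVopen (qd_const n (-1)) hf
  refine qd_subj ?_ h
  funext α; show -1 * f α = -(f α); ring

lemma qd_sub (hVopen : IsOpen V) {n f g} (hf : QD V A X0 t n f) (hg : QD V A X0 t n g) :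
    QD V A X0 t n (f - g) := by
  have h := qd_add hVopen hf (qd_neg hVopen hg)
  refine qd_subj ?_ h
  funext α; show f α + -(g α) = f α - g α; ring

lemma qd_inv (hVopen : IsOpen V) {n f} (hf : QD V A X0 t (n+1) f)
    (hne : ∀ α ∈ V, f α ≠ 0) (hmem : (fun α => (f α)⁻¹) ∈ A) :
    QD V A X0 t (n+1) (fun α => (f α)⁻¹) := by
  induction n generalizing f with
  | zero =>
    obtain ⟨⟨hfd, hfA⟩, F, hFq, hFe⟩ := hf
    refine ⟨⟨hfd.inv hne, hmem⟩,
      -((fun α => (f α)⁻¹) * (fun α => (f α)⁻¹) * F),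
      qd_neg hVopen (qd_mul hVopen (qd_mul hVopen ⟨hfd.inv hne, hmem⟩ ⟨hfd.inv hne, hmem⟩) hFq), ?_⟩
    intro α hα
    have hd := ((diffAt hVopen hfd hα).hasDerivAt.fun_inv (hne α hα)).deriv
    show Ufun X0 t α * (α * deriv (fun β => (f β)⁻¹) α) =
      -((f α)⁻¹ * (f α)⁻¹ * F α)
    rw [hd, ← hFe hα]
    show Ufun X0 t α * (α * (-deriv f α / f α ^ 2)) =
      -((f α)⁻¹ * (f α)⁻¹ * (Ufun X0 t α * (α * deriv f α)))
    simp only [div_eq_mul_inv, pow_two, mul_inv]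
    ring
  | succ n ih =>
    obtain ⟨⟨hfd, hfA⟩, F, hFq, hFe⟩ := hf
    have hstep := ih (f := f) (qd_down ⟨⟨hfd, hfA⟩, F, hFq, hFe⟩) hne hmem
    refine ⟨⟨hfd.inv hne, hmem⟩,
      -((fun α => (f α)⁻¹) * (fun α => (f α)⁻¹) * F),
      qd_neg hVopen (qd_mul hVopen (qd_mul hVopen hstep hstep) hFq), ?_⟩
    intro α hα
    have hd := ((diffAt hVopen hfd hα).hasDerivAt.fun_inv (hne α hα)).deriv
    show Ufun X0 t α * (α * deriv (fun β => (f β)⁻¹) α) =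
      -((f α)⁻¹ * (f α)⁻¹ * F α)
    rw [hd, ← hFe hα]
    show Ufun X0 t α * (α * (-deriv f α / f α ^ 2)) =
      -((f α)⁻¹ * (f α)⁻¹ * (Ufun X0 t α * (α * deriv f α)))
    simp only [div_eq_mul_inv, pow_two, mul_inv]
    ring

lemma qd_congr (hVopen : IsOpen V) {n f g} (h : Set.EqOn f g V)
    (hgd : DifferentiableOn ℂ g V) (hgA : g ∈ A) (hf : QD V A X0 t n f) :
    QD V A X0 t n g := by
  cases n with
  | zero => exact ⟨hgd, hgA⟩
  | succ n =>
    obtain ⟨_, F, hFq, hFe⟩ := hf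
    refine ⟨⟨hgd, hgA⟩, F, hFq, ?_⟩
    intro α hα
    show Ufun X0 t α * (α * deriv g α) = F α
    rw [← deriv_congr_of_eqOn hVopen h hα]
    exact hFe hα


lemma euler_an {f : ℂ → ℂ} (hf : AnalyticOnNhd ℂ f V) : AnalyticOnNhd ℂ (euler f) V :=
  analyticOnNhd_id.mul hf.deriv

lemma euler_congr (hVopen : IsOpen V) {f g : ℂ → ℂ} (h : Set.EqOn f g V) :
    Set.EqOn (euler f) (euler g) V := by
  intro α hα
  show α * deriv f α = α * deriv g α
  rw [deriv_congr_of_eqOn hVopen h hα]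

lemma euler_add (hVopen : IsOpen V) {f g : ℂ → ℂ} (hf : DifferentiableOn ℂ f V)
    (hg : DifferentiableOn ℂ g V) :
    Set.EqOn (euler (fun β => f β + g β)) (fun β => euler f β + euler g β) V := by
  intro α hα
  show α * deriv (fun β => f β + g β) α = α * deriv f α + α * deriv g α
  rw [deriv_fun_add (diffAt hVopen hf hα) (diffAt hVopen hg hα)]
  ring

lemma euler_cmul (hVopen : IsOpen V) (c : ℂ) {f : ℂ → ℂ} (hf : DifferentiableOn ℂ f V) :
    Set.EqOn (euler (fun β => c * f β)) (fun β => c * euler f β) V := by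
  intro α hα
  show α * deriv (fun β => c * f β) α = c * (α * deriv f α)
  rw [deriv_const_mul c (diffAt hVopen hf hα)]
  ring

lemma euler_mul (hVopen : IsOpen V) {f g : ℂ → ℂ} (hf : DifferentiableOn ℂ f V)
    (hg : DifferentiableOn ℂ g V) :
    Set.EqOn (euler (fun β => f β * g β)) (fun β => euler f β * g β + f β * euler g β) V := by
  intro α hα
  show α * deriv (fun β => f β * g β) α = (α * deriv f α) * g α + f α * (α * deriv g α)
  rw [deriv_fun_mul (diffAt hVopen hf hα) (diffAt hVopen hg hα)]
  ring

lemma dop_congr (hVopen : IsOpen V) {f g : ℂ → ℂ} (h : Set.EqOn f g V) :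
    Set.EqOn (Dop X0 t f) (Dop X0 t g) V := by
  intro α hα
  show Ufun X0 t α * (α * deriv f α) = Ufun X0 t α * (α * deriv g α)
  rw [deriv_congr_of_eqOn hVopen h hα]

lemma dop_add (hVopen : IsOpen V) {f g : ℂ → ℂ} (hf : DifferentiableOn ℂ f V)
    (hg : DifferentiableOn ℂ g V) :
    Set.EqOn (Dop X0 t (fun β => f β + g β))
      (fun β => Dop X0 t f β + Dop X0 t g β) V := by
  intro α hα
  show Ufun X0 t α * (α * deriv (fun β => f β + g β) α) =
    Ufun X0 t α * (α * deriv f α) + Ufun X0 t α * (α * deriv g α)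
  rw [deriv_fun_add (diffAt hVopen hf hα) (diffAt hVopen hg hα)]
  ring

lemma dop_mul (hVopen : IsOpen V) {f g : ℂ → ℂ} (hf : DifferentiableOn ℂ f V)
    (hg : DifferentiableOn ℂ g V) :
    Set.EqOn (Dop X0 t (fun β => f β * g β))
      (fun β => Dop X0 t f β * g β + f β * Dop X0 t g β) V := by
  intro α hα
  show Ufun X0 t α * (α * deriv (fun β => f β * g β) α) =
    (Ufun X0 t α * (α * deriv f α)) * g α + f α * (Ufun X0 t α * (α * deriv g α))
  rw [deriv_fun_mul (diffAt hVopen hf hα) (diffAt hVopen hg hα)]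
  ring

lemma theta_step (hVopen : IsOpen V) (hUne : ∀ α ∈ V, Ufun X0 t α ≠ 0)
    {zk Zk F : ℂ → ℂ} (hE : Set.EqOn zk Zk V) (hF : Set.EqOn (Dop X0 t Zk) F V) :
    Set.EqOn (euler zk) (fun α => (Ufun X0 t α)⁻¹ * F α) V := by
  intro α hα
  have h1 : Ufun X0 t α * euler zk α = F α := by
    show Ufun X0 t α * (α * deriv zk α) = F α
    rw [deriv_congr_of_eqOn hVopen hE hα]
    exact hF hα
  show euler zk α = (Ufun X0 t α)⁻¹ * F α
  rw [← h1, inv_mul_cancel_left₀ (hUne α hα)]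

lemma nest_expand (hVopen : IsOpen V) {f : ℂ → ℂ} (hf : AnalyticOnNhd ℂ f V)
    (c₁ c₂ c₃ c₄ : ℂ) {α : ℂ} (hα : α ∈ V) :
    shiftEuler c₁ (shiftEuler c₂ (shiftEuler c₃ (shiftEuler c₄ f))) α =
      euler (euler (euler (euler f))) α
      + (c₁+c₂+c₃+c₄) * euler (euler (euler f)) α
      + (c₁*c₂+c₁*c₃+c₁*c₄+c₂*c₃+c₂*c₄+c₃*c₄) * euler (euler f) α
      + (c₁*c₂*c₃+c₁*c₂*c₄+c₁*c₃*c₄+c₂*c₃*c₄) * euler f α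
      + (c₁*c₂*c₃*c₄) * f α := by
  have hg1 : AnalyticOnNhd ℂ (euler f) V := euler_an hf
  have hg2 : AnalyticOnNhd ℂ (euler (euler f)) V := euler_an hg1
  have hg3 : AnalyticOnNhd ℂ (euler (euler (euler f))) V := euler_an hg2
  have d0 : ∀ {β : ℂ}, β ∈ V → DifferentiableAt ℂ f β :=
    fun hβ => diffAt hVopen hf.differentiableOn hβ
  have d1 : ∀ {β : ℂ}, β ∈ V → DifferentiableAt ℂ (euler f) β :=
    fun hβ => diffAt hVopen hg1.differentiableOn hβ
  have d2 : ∀ {β : ℂ}, β ∈ V → DifferentiableAt ℂ (euler (euler f)) β :=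
    fun hβ => diffAt hVopen hg2.differentiableOn hβ
  have d3 : ∀ {β : ℂ}, β ∈ V → DifferentiableAt ℂ (euler (euler (euler f))) β :=
    fun hβ => diffAt hVopen hg3.differentiableOn hβ
  have e4 : Set.EqOn (euler (shiftEuler c₄ f))
      (fun β => euler (euler f) β + c₄ * euler f β) V := by
    intro β hβ
    show β * deriv (fun γ => euler f γ + c₄ * f γ) β = _
    rw [deriv_fun_add (d1 hβ) ((d0 hβ).const_mul c₄), deriv_const_mul c₄ (d0 hβ)]
    show β * (deriv (euler f) β + c₄ * deriv f β) =
      β * deriv (euler f) β + c₄ * (β * deriv f β)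
    ring
  have h3 : Set.EqOn (shiftEuler c₃ (shiftEuler c₄ f))
      (fun β => euler (euler f) β + (c₃ + c₄) * euler f β + (c₃ * c₄) * f β) V := by
    intro β hβ
    show euler (shiftEuler c₄ f) β + c₃ * shiftEuler c₄ f β = _
    rw [e4 hβ]
    show euler (euler f) β + c₄ * euler f β + c₃ * (euler f β + c₄ * f β) =
      euler (euler f) β + (c₃ + c₄) * euler f β + (c₃ * c₄) * f β
    ring
  have e3 : Set.EqOn (euler (shiftEuler c₃ (shiftEuler c₄ f)))
      (fun β => euler (euler (euler f)) β + (c₃ + c₄) * euler (euler f) β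
        + (c₃ * c₄) * euler f β) V := by
    intro β hβ
    show β * deriv (shiftEuler c₃ (shiftEuler c₄ f)) β = _
    rw [deriv_congr_of_eqOn hVopen h3 hβ,
      deriv_fun_add ((d2 hβ).fun_add ((d1 hβ).const_mul (c₃ + c₄))) ((d0 hβ).const_mul (c₃ * c₄)),
      deriv_fun_add (d2 hβ) ((d1 hβ).const_mul (c₃ + c₄)),
      deriv_const_mul (c₃ + c₄) (d1 hβ), deriv_const_mul (c₃ * c₄) (d0 hβ)]
    show β * (deriv (euler (euler f)) β + (c₃ + c₄) * deriv (euler f) β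
        + c₃ * c₄ * deriv f β) =
      β * deriv (euler (euler f)) β + (c₃ + c₄) * (β * deriv (euler f) β)
        + (c₃ * c₄) * (β * deriv f β)
    ring
  have h2 : Set.EqOn (shiftEuler c₂ (shiftEuler c₃ (shiftEuler c₄ f)))
      (fun β => euler (euler (euler f)) β + (c₂ + c₃ + c₄) * euler (euler f) β
        + (c₂*c₃ + c₂*c₄ + c₃*c₄) * euler f β + (c₂*c₃*c₄) * f β) V := by
    intro β hβ
    show euler (shiftEuler c₃ (shiftEuler c₄ f)) β
        + c₂ * shiftEuler c₃ (shiftEuler c₄ f) β = _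
    rw [e3 hβ, h3 hβ]
    ring
  have e2 : Set.EqOn (euler (shiftEuler c₂ (shiftEuler c₃ (shiftEuler c₄ f))))
      (fun β => euler (euler (euler (euler f))) β + (c₂ + c₃ + c₄) * euler (euler (euler f)) β
        + (c₂*c₃ + c₂*c₄ + c₃*c₄) * euler (euler f) β + (c₂*c₃*c₄) * euler f β) V := by
    intro β hβ
    show β * deriv (shiftEuler c₂ (shiftEuler c₃ (shiftEuler c₄ f))) β = _
    rw [deriv_congr_of_eqOn hVopen h2 hβ,
      deriv_fun_add (((d3 hβ).fun_add ((d2 hβ).const_mul (c₂ + c₃ + c₄))).fun_add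
        ((d1 hβ).const_mul (c₂*c₃ + c₂*c₄ + c₃*c₄))) ((d0 hβ).const_mul (c₂*c₃*c₄)),
      deriv_fun_add ((d3 hβ).fun_add ((d2 hβ).const_mul (c₂ + c₃ + c₄)))
        ((d1 hβ).const_mul (c₂*c₃ + c₂*c₄ + c₃*c₄)),
      deriv_fun_add (d3 hβ) ((d2 hβ).const_mul (c₂ + c₃ + c₄)),
      deriv_const_mul (c₂ + c₃ + c₄) (d2 hβ),
      deriv_const_mul (c₂*c₃ + c₂*c₄ + c₃*c₄) (d1 hβ),
      deriv_const_mul (c₂*c₃*c₄) (d0 hβ)]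
    show β * (deriv (euler (euler (euler f))) β + (c₂ + c₃ + c₄) * deriv (euler (euler f)) β
        + (c₂*c₃ + c₂*c₄ + c₃*c₄) * deriv (euler f) β + c₂*c₃*c₄ * deriv f β) =
      β * deriv (euler (euler (euler f))) β
        + (c₂ + c₃ + c₄) * (β * deriv (euler (euler f)) β)
        + (c₂*c₃ + c₂*c₄ + c₃*c₄) * (β * deriv (euler f) β)
        + (c₂*c₃*c₄) * (β * deriv f β)
    ring
  show euler (shiftEuler c₂ (shiftEuler c₃ (shiftEuler c₄ f))) α
      + c₁ * shiftEuler c₂ (shiftEuler c₃ (shiftEuler c₄ f)) α = _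
  rw [e2 hα, h2 hα]
  ring

end Stmt8Aux

open Stmt8Aux

/-- Let `X⁰` and `X⁰·t` be holomorphic solutions on a nonempty connected
open `V ⊆ ℂ∖{0,1}` of `ℒf = 0`, where `ℒ = θ⁴ − α(θ+c₁)(θ+c₂)(θ+c₃)(θ+c₄)`, with `X⁰`
and `θt` nowhere vanishing.  Then the `ℂ`-subalgebra of functions generated by
`α^{±1}, (1−α)⁻¹, (X⁰)^{±1}, (θt)^{±1}` and `𝒟X⁰, 𝒟²X⁰, 𝒟³X⁰, 𝒟(θt), 𝒟²(θt)` is closed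
under the derivation `𝒟f = (1−α)(X⁰θt)²θf` (as functions on `V`). -/
theorem stmt_8 (V : Set ℂ) (hVopen : IsOpen V) (hVconn : IsConnected V)
    (hV01 : ∀ α ∈ V, α ≠ 0 ∧ α ≠ 1)
    (c₁ c₂ c₃ c₄ : ℂ)
    (X0 t : ℂ → ℂ)
    (hX0 : DifferentiableOn ℂ X0 V) (ht : DifferentiableOn ℂ t V)
    (hX0ne : ∀ α ∈ V, X0 α ≠ 0) (hθtne : ∀ α ∈ V, α * deriv t α ≠ 0)
    (hL1 : ∀ α ∈ V,
      euler (euler (euler (euler X0))) α =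
        α * shiftEuler c₁ (shiftEuler c₂ (shiftEuler c₃ (shiftEuler c₄ X0))) α)
    (hL2 : ∀ α ∈ V,
      euler (euler (euler (euler (fun β => X0 β * t β)))) α =
        α * shiftEuler c₁
          (shiftEuler c₂ (shiftEuler c₃ (shiftEuler c₄ (fun β => X0 β * t β)))) α) :
    ∀ f ∈ Algebra.adjoin ℂ (genSet X0 t),
      ∃ g ∈ Algebra.adjoin ℂ (genSet X0 t), Set.EqOn (Dop X0 t f) g V := by
  classical
  set A := Algebra.adjoin ℂ (genSet X0 t) with hAdef
  -- nonvanishing basics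
  have hV1 : ∀ α ∈ V, (1 : ℂ) - α ≠ 0 := fun α hα => sub_ne_zero.mpr (Ne.symm (hV01 α hα).2)
  have hα0 : ∀ α ∈ V, α ≠ 0 := fun α hα => (hV01 α hα).1
  -- analyticity
  have hX0an : AnalyticOnNhd ℂ X0 V := hX0.analyticOnNhd hVopen
  have htan : AnalyticOnNhd ℂ t V := ht.analyticOnNhd hVopen
  have hs0an : AnalyticOnNhd ℂ (fun α => α * deriv t α) V := euler_an htan
  have hz1an : AnalyticOnNhd ℂ (euler X0) V := euler_an hX0an
  have hz2an : AnalyticOnNhd ℂ (euler (euler X0)) V := euler_an hz1an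
  have hz3an : AnalyticOnNhd ℂ (euler (euler (euler X0))) V := euler_an hz2an
  have ht1an : AnalyticOnNhd ℂ (euler t) V := euler_an htan
  have ht2an : AnalyticOnNhd ℂ (euler (euler t)) V := euler_an ht1an
  have ht3an : AnalyticOnNhd ℂ (euler (euler (euler t))) V := euler_an ht2an
  have hUan : AnalyticOnNhd ℂ (Ufun X0 t) V :=
    (analyticOnNhd_const.sub analyticOnNhd_id).mul ((hX0an.mul hs0an).pow 2)
  have hUd : DifferentiableOn ℂ (Ufun X0 t) V := hUan.differentiableOn
  have hUne : ∀ α ∈ V, Ufun X0 t α ≠ 0 := fun α hα =>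
    mul_ne_zero (hV1 α hα) (pow_ne_zero 2 (mul_ne_zero (hX0ne α hα) (hθtne α hα)))
  have hUId : DifferentiableOn ℂ (fun α => (Ufun X0 t α)⁻¹) V := hUd.inv hUne
  have hDdiff : ∀ {f : ℂ → ℂ}, DifferentiableOn ℂ f V → DifferentiableOn ℂ (Dop X0 t f) V :=
    fun hf => (hUan.mul (euler_an (hf.analyticOnNhd hVopen))).differentiableOn
  -- memberships of the generators
  have hidA : (fun α : ℂ => α) ∈ A := Algebra.subset_adjoin (by simp only [genSet, Set.mem_insert_iff, Set.mem_singleton_iff]; tauto)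
  have hiaA : (fun α : ℂ => α⁻¹) ∈ A := Algebra.subset_adjoin (by simp only [genSet, Set.mem_insert_iff, Set.mem_singleton_iff]; tauto)
  have hi1A : (fun α : ℂ => (1 - α)⁻¹) ∈ A := Algebra.subset_adjoin (by simp only [genSet, Set.mem_insert_iff, Set.mem_singleton_iff]; tauto)
  have hX0A : X0 ∈ A := Algebra.subset_adjoin (by simp only [genSet, Set.mem_insert_iff, Set.mem_singleton_iff]; tauto)
  have hiXA : (fun α => (X0 α)⁻¹) ∈ A := Algebra.subset_adjoin (by simp only [genSet, Set.mem_insert_iff, Set.mem_singleton_iff]; tauto)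
  have hs0A : (fun α => α * deriv t α) ∈ A := Algebra.subset_adjoin (by simp only [genSet, Set.mem_insert_iff, Set.mem_singleton_iff]; tauto)
  have hitA : (fun α => (α * deriv t α)⁻¹) ∈ A := Algebra.subset_adjoin (by simp only [genSet, Set.mem_insert_iff, Set.mem_singleton_iff]; tauto)
  have hG1A : Dop X0 t X0 ∈ A := Algebra.subset_adjoin (by simp only [genSet, Set.mem_insert_iff, Set.mem_singleton_iff]; tauto)
  have hG2A : Dop X0 t (Dop X0 t X0) ∈ A := Algebra.subset_adjoin (by simp only [genSet, Set.mem_insert_iff, Set.mem_singleton_iff]; tauto)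
  have hG3A : Dop X0 t (Dop X0 t (Dop X0 t X0)) ∈ A := Algebra.subset_adjoin (by simp only [genSet, Set.mem_insert_iff, Set.mem_singleton_iff]; tauto)
  have hH1A : Dop X0 t (fun α => α * deriv t α) ∈ A := Algebra.subset_adjoin (by simp only [genSet, Set.mem_insert_iff, Set.mem_singleton_iff]; tauto)
  have hH2A : Dop X0 t (Dop X0 t (fun α => α * deriv t α)) ∈ A :=
    Algebra.subset_adjoin (by simp only [genSet, Set.mem_insert_iff, Set.mem_singleton_iff]; tauto)
  have hlA : (fun α : ℂ => 1 - α) ∈ A := A.sub_mem A.one_mem hidA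
  have hUfactor : ((fun α : ℂ => 1 - α) *
      ((X0 * fun α => α * deriv t α) * (X0 * fun α => α * deriv t α))) = Ufun X0 t := by
    funext α
    show (1 - α) * ((X0 α * (α * deriv t α)) * (X0 α * (α * deriv t α))) =
      (1 - α) * (X0 α * (α * deriv t α)) ^ 2
    ring
  have hUA : Ufun X0 t ∈ A := by
    rw [← hUfactor]
    exact A.mul_mem hlA (A.mul_mem (A.mul_mem hX0A hs0A) (A.mul_mem hX0A hs0A))
  have hUIA : (fun α => (Ufun X0 t α)⁻¹) ∈ A := by
    have h : (fun α => (Ufun X0 t α)⁻¹) = ((fun α : ℂ => (1 - α)⁻¹) *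
        (((fun α => (X0 α)⁻¹) * fun α => (α * deriv t α)⁻¹) *
         ((fun α => (X0 α)⁻¹) * fun α => (α * deriv t α)⁻¹))) := by
      funext α
      show ((1 - α) * (X0 α * (α * deriv t α)) ^ 2)⁻¹ =
        (1 - α)⁻¹ * (((X0 α)⁻¹ * (α * deriv t α)⁻¹) * ((X0 α)⁻¹ * (α * deriv t α)⁻¹))
      rw [mul_inv, pow_two, mul_inv, mul_inv]
    rw [h]
    exact A.mul_mem hi1A (A.mul_mem (A.mul_mem hiXA hitA) (A.mul_mem hiXA hitA))
  -- level-0 facts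
  have q0X0 : QD V A X0 t 0 X0 := ⟨hX0, hX0A⟩
  have q0s0 : QD V A X0 t 0 (fun α => α * deriv t α) := ⟨hs0an.differentiableOn, hs0A⟩
  have q0id : QD V A X0 t 0 (fun α : ℂ => α) := ⟨differentiableOn_id, hidA⟩
  have hld : DifferentiableOn ℂ (fun α : ℂ => 1 - α) V :=
    (differentiableOn_const 1).sub differentiableOn_id
  have q0l : QD V A X0 t 0 (fun α : ℂ => 1 - α) := ⟨hld, hlA⟩
  have q0G1 : QD V A X0 t 0 (Dop X0 t X0) := ⟨hDdiff hX0, hG1A⟩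
  have q0G2 : QD V A X0 t 0 (Dop X0 t (Dop X0 t X0)) := ⟨hDdiff (hDdiff hX0), hG2A⟩
  have q0G3 : QD V A X0 t 0 (Dop X0 t (Dop X0 t (Dop X0 t X0))) :=
    ⟨hDdiff (hDdiff (hDdiff hX0)), hG3A⟩
  have q0H1 : QD V A X0 t 0 (Dop X0 t (fun α => α * deriv t α)) :=
    ⟨hDdiff hs0an.differentiableOn, hH1A⟩
  have q0H2 : QD V A X0 t 0 (Dop X0 t (Dop X0 t (fun α => α * deriv t α))) :=
    ⟨hDdiff (hDdiff hs0an.differentiableOn), hH2A⟩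
  have q0U : QD V A X0 t 0 (Ufun X0 t) := ⟨hUd, hUA⟩
  have q0UI : QD V A X0 t 0 (fun α => (Ufun X0 t α)⁻¹) := ⟨hUId, hUIA⟩
  -- derivative of the identity and of 1-α (pointwise facts)
  have hDid : Set.EqOn (Dop X0 t (fun α : ℂ => α)) (Ufun X0 t * fun α : ℂ => α) V := by
    intro α hα
    have hd : deriv (fun β : ℂ => β) α = 1 := by simp
    show Ufun X0 t α * (α * deriv (fun β : ℂ => β) α) = Ufun X0 t α * α
    rw [hd]; ring
  have hDl : Set.EqOn (Dop X0 t (fun α : ℂ => 1 - α))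
      (-(Ufun X0 t * fun α : ℂ => α)) V := by
    intro α hα
    have hd : deriv (fun β : ℂ => 1 - β) α = -1 := by
      simpa using ((hasDerivAt_id α).const_sub (1 : ℂ)).deriv
    show Ufun X0 t α * (α * deriv (fun β : ℂ => 1 - β) α) = -(Ufun X0 t α * α)
    rw [hd]; ring
  -- D-chain Q-facts for X0 and θt
  have q1G2 : QD V A X0 t 1 (Dop X0 t (Dop X0 t X0)) :=
    ⟨q0G2, _, q0G3, Set.eqOn_refl _ _⟩
  have q2G1 : QD V A X0 t 2 (Dop X0 t X0) := ⟨q0G1, _, q1G2, Set.eqOn_refl _ _⟩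
  have q3X0 : QD V A X0 t 3 X0 := ⟨q0X0, _, q2G1, Set.eqOn_refl _ _⟩
  have q2X0 : QD V A X0 t 2 X0 := qd_down q3X0
  have q1X0 : QD V A X0 t 1 X0 := qd_down q2X0
  have q1H1 : QD V A X0 t 1 (Dop X0 t (fun α => α * deriv t α)) :=
    ⟨q0H1, _, q0H2, Set.eqOn_refl _ _⟩
  have q2s0 : QD V A X0 t 2 (fun α => α * deriv t α) := ⟨q0s0, _, q1H1, Set.eqOn_refl _ _⟩
  have q1s0 : QD V A X0 t 1 (fun α => α * deriv t α) := qd_down q2s0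
  -- ladder for id, 1-α, U, U⁻¹ through level 2
  have q1id : QD V A X0 t 1 (fun α : ℂ => α) :=
    ⟨q0id, _, qd_mul hVopen q0U q0id, hDid⟩
  have q1l : QD V A X0 t 1 (fun α : ℂ => 1 - α) :=
    ⟨q0l, _, qd_neg hVopen (qd_mul hVopen q0U q0id), hDl⟩
  have q1U : QD V A X0 t 1 (Ufun X0 t) :=
    qd_subj hUfactor (qd_mul hVopen q1l
      (qd_mul hVopen (qd_mul hVopen q1X0 q1s0) (qd_mul hVopen q1X0 q1s0)))
  have q1UI : QD V A X0 t 1 (fun α => (Ufun X0 t α)⁻¹) := qd_inv hVopen q1U hUne hUIA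
  have q2id : QD V A X0 t 2 (fun α : ℂ => α) :=
    ⟨q0id, _, qd_mul hVopen q1U q1id, hDid⟩
  have q2l : QD V A X0 t 2 (fun α : ℂ => 1 - α) :=
    ⟨q0l, _, qd_neg hVopen (qd_mul hVopen q1U q1id), hDl⟩
  have q2U : QD V A X0 t 2 (Ufun X0 t) :=
    qd_subj hUfactor (qd_mul hVopen q2l
      (qd_mul hVopen (qd_mul hVopen q2X0 q2s0) (qd_mul hVopen q2X0 q2s0)))
  have q2UI : QD V A X0 t 2 (fun α => (Ufun X0 t α)⁻¹) := qd_inv hVopen q2U hUne hUIA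
  obtain ⟨DU, q1DU, hDU⟩ := q2U.2
  obtain ⟨DDU, q0DDU, hDDU⟩ := q1DU.2
  have q0DU : QD V A X0 t 0 DU := qd_down q1DU
  -- the z-chain : θᵏX0 in terms of algebra elements
  have hz1 : ∀ α ∈ V, euler X0 α = (Ufun X0 t α)⁻¹ * Dop X0 t X0 α := fun α hα =>
    theta_step hVopen hUne (Set.eqOn_refl X0 V) (Set.eqOn_refl _ _) hα
  have q2Z1 : QD V A X0 t 2 ((fun α => (Ufun X0 t α)⁻¹) * Dop X0 t X0) :=
    qd_mul hVopen q2UI q2G1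
  obtain ⟨DZ1, q1DZ1, hDZ1⟩ := q2Z1.2
  have q0DZ1 : QD V A X0 t 0 DZ1 := qd_down q1DZ1
  have hz2 : ∀ α ∈ V, euler (euler X0) α = (Ufun X0 t α)⁻¹ * DZ1 α := fun α hα =>
    theta_step hVopen hUne (fun β hβ => hz1 β hβ) hDZ1 hα
  have q1Z2 : QD V A X0 t 1 ((fun α => (Ufun X0 t α)⁻¹) * DZ1) := qd_mul hVopen q1UI q1DZ1
  obtain ⟨DZ2, q0DZ2, hDZ2⟩ := q1Z2.2
  have hz3 : ∀ α ∈ V, euler (euler (euler X0)) α = (Ufun X0 t α)⁻¹ * DZ2 α := fun α hα =>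
    theta_step hVopen hUne (fun β hβ => hz2 β hβ) hDZ2 hα
  -- the s-chain : θᵏ(θt)
  have hs1 : ∀ α ∈ V, euler (euler t) α =
      (Ufun X0 t α)⁻¹ * Dop X0 t (fun α => α * deriv t α) α := fun α hα =>
    theta_step hVopen hUne (show Set.EqOn (euler t) (fun α => α * deriv t α) V from
      fun _ _ => rfl) (Set.eqOn_refl _ _) hα
  have q1S1 : QD V A X0 t 1 ((fun α => (Ufun X0 t α)⁻¹) * Dop X0 t (fun α => α * deriv t α)) :=
    qd_mul hVopen q1UI q1H1
  obtain ⟨DS1, q0DS1, hDS1⟩ := q1S1.2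
  have hs2 : ∀ α ∈ V, euler (euler (euler t)) α = (Ufun X0 t α)⁻¹ * DS1 α := fun α hα =>
    theta_step hVopen hUne (fun β hβ => hs1 β hβ) hDS1 hα
  -- differentiability shortcuts
  have dz1 : DifferentiableOn ℂ (euler X0) V := hz1an.differentiableOn
  have dz2 : DifferentiableOn ℂ (euler (euler X0)) V := hz2an.differentiableOn
  have dz3 : DifferentiableOn ℂ (euler (euler (euler X0))) V := hz3an.differentiableOn
  have dt1 : DifferentiableOn ℂ (euler t) V := ht1an.differentiableOn
  have dt2 : DifferentiableOn ℂ (euler (euler t)) V := ht2an.differentiableOn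
  have dt3 : DifferentiableOn ℂ (euler (euler (euler t))) V := ht3an.differentiableOn
  -- Picard–Fuchs equations in expanded euler form
  have hODE1 : ∀ α ∈ V, euler (euler (euler (euler X0))) α =
      α * (euler (euler (euler (euler X0))) α
        + (c₁+c₂+c₃+c₄) * euler (euler (euler X0)) α
        + (c₁*c₂+c₁*c₃+c₁*c₄+c₂*c₃+c₂*c₄+c₃*c₄) * euler (euler X0) α
        + (c₁*c₂*c₃+c₁*c₂*c₄+c₁*c₃*c₄+c₂*c₃*c₄) * euler X0 α
        + (c₁*c₂*c₃*c₄) * X0 α) := by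
    intro α hα
    have h := hL1 α hα
    rw [nest_expand hVopen hX0an c₁ c₂ c₃ c₄ hα] at h
    exact h
  have hyan : AnalyticOnNhd ℂ (fun β => X0 β * t β) V := hX0an.mul htan
  have hODE2 : ∀ α ∈ V, euler (euler (euler (euler (fun β => X0 β * t β)))) α =
      α * (euler (euler (euler (euler (fun β => X0 β * t β)))) α
        + (c₁+c₂+c₃+c₄) * euler (euler (euler (fun β => X0 β * t β))) α
        + (c₁*c₂+c₁*c₃+c₁*c₄+c₂*c₃+c₂*c₄+c₃*c₄) * euler (euler (fun β => X0 β * t β)) α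
        + (c₁*c₂*c₃+c₁*c₂*c₄+c₁*c₃*c₄+c₂*c₃*c₄) * euler (fun β => X0 β * t β) α
        + (c₁*c₂*c₃*c₄) * (X0 α * t α)) := by
    intro α hα
    have h := hL2 α hα
    rw [nest_expand hVopen hyan c₁ c₂ c₃ c₄ hα] at h
    exact h
  -- Leibniz expansion of the euler iterates of X0·t
  have hw1 : ∀ α ∈ V, euler (fun β => X0 β * t β) α =
      euler X0 α * t α + X0 α * euler t α := fun α hα =>
    euler_mul hVopen hX0 ht hα
  have hw2 : ∀ α ∈ V, euler (euler (fun β => X0 β * t β)) α =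
      (euler (euler X0) α * t α + euler X0 α * euler t α)
      + (euler X0 α * euler t α + X0 α * euler (euler t) α) := by
    intro α hα
    have b1 : euler (euler (fun β => X0 β * t β)) α =
        euler (fun β => euler X0 β * t β + X0 β * euler t β) α :=
      euler_congr hVopen (fun β hβ => hw1 β hβ) hα
    have b2 : euler (fun β => euler X0 β * t β + X0 β * euler t β) α =
        euler (fun γ => euler X0 γ * t γ) α + euler (fun γ => X0 γ * euler t γ) α :=
      euler_add hVopen (dz1.mul ht) (hX0.mul dt1) hα
    have b3 : euler (fun γ => euler X0 γ * t γ) α =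
        euler (euler X0) α * t α + euler X0 α * euler t α :=
      euler_mul hVopen dz1 ht hα
    have b4 : euler (fun γ => X0 γ * euler t γ) α =
        euler X0 α * euler t α + X0 α * euler (euler t) α :=
      euler_mul hVopen hX0 dt1 hα
    rw [b1, b2, b3, b4]
  have hw3 : ∀ α ∈ V, euler (euler (euler (fun β => X0 β * t β))) α =
      ((euler (euler (euler X0)) α * t α + euler (euler X0) α * euler t α)
        + (euler (euler X0) α * euler t α + euler X0 α * euler (euler t) α))
      + ((euler (euler X0) α * euler t α + euler X0 α * euler (euler t) α)
        + (euler X0 α * euler (euler t) α + X0 α * euler (euler (euler t)) α)) := by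
    intro α hα
    have b1 : euler (euler (euler (fun β => X0 β * t β))) α =
        euler (fun β => (euler (euler X0) β * t β + euler X0 β * euler t β)
          + (euler X0 β * euler t β + X0 β * euler (euler t) β)) α :=
      euler_congr hVopen (fun β hβ => hw2 β hβ) hα
    have b2 : euler (fun β => (euler (euler X0) β * t β + euler X0 β * euler t β)
          + (euler X0 β * euler t β + X0 β * euler (euler t) β)) α =
        euler (fun γ => euler (euler X0) γ * t γ + euler X0 γ * euler t γ) α
        + euler (fun γ => euler X0 γ * euler t γ + X0 γ * euler (euler t) γ) α :=
      euler_add hVopen ((dz2.mul ht).add (dz1.mul dt1)) ((dz1.mul dt1).add (hX0.mul dt2)) hα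
    have b3 : euler (fun γ => euler (euler X0) γ * t γ + euler X0 γ * euler t γ) α =
        euler (fun δ => euler (euler X0) δ * t δ) α + euler (fun δ => euler X0 δ * euler t δ) α :=
      euler_add hVopen (dz2.mul ht) (dz1.mul dt1) hα
    have b4 : euler (fun γ => euler X0 γ * euler t γ + X0 γ * euler (euler t) γ) α =
        euler (fun δ => euler X0 δ * euler t δ) α + euler (fun δ => X0 δ * euler (euler t) δ) α :=
      euler_add hVopen (dz1.mul dt1) (hX0.mul dt2) hα
    have b5 : euler (fun δ => euler (euler X0) δ * t δ) α =
        euler (euler (euler X0)) α * t α + euler (euler X0) α * euler t α :=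
      euler_mul hVopen dz2 ht hα
    have b6 : euler (fun δ => euler X0 δ * euler t δ) α =
        euler (euler X0) α * euler t α + euler X0 α * euler (euler t) α :=
      euler_mul hVopen dz1 dt1 hα
    have b7 : euler (fun δ => X0 δ * euler (euler t) δ) α =
        euler X0 α * euler (euler t) α + X0 α * euler (euler (euler t)) α :=
      euler_mul hVopen hX0 dt2 hα
    rw [b1, b2, b3, b4, b5, b6, b7]
  have hw4 : ∀ α ∈ V, euler (euler (euler (euler (fun β => X0 β * t β)))) α =
      (((euler (euler (euler (euler X0))) α * t α + euler (euler (euler X0)) α * euler t α)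
        + (euler (euler (euler X0)) α * euler t α + euler (euler X0) α * euler (euler t) α))
       + ((euler (euler (euler X0)) α * euler t α + euler (euler X0) α * euler (euler t) α)
        + (euler (euler X0) α * euler (euler t) α + euler X0 α * euler (euler (euler t)) α)))
      + ((((euler (euler (euler X0)) α * euler t α + euler (euler X0) α * euler (euler t) α)
        + (euler (euler X0) α * euler (euler t) α + euler X0 α * euler (euler (euler t)) α)))
       + ((euler (euler X0) α * euler (euler t) α + euler X0 α * euler (euler (euler t)) α)
        + (euler X0 α * euler (euler (euler t)) α + X0 α * euler (euler (euler (euler t))) α))) := by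
    intro α hα
    have b1 : euler (euler (euler (euler (fun β => X0 β * t β)))) α =
        euler (fun β => ((euler (euler (euler X0)) β * t β + euler (euler X0) β * euler t β)
          + (euler (euler X0) β * euler t β + euler X0 β * euler (euler t) β))
          + ((euler (euler X0) β * euler t β + euler X0 β * euler (euler t) β)
          + (euler X0 β * euler (euler t) β + X0 β * euler (euler (euler t)) β))) α :=
      euler_congr hVopen (fun β hβ => hw3 β hβ) hα
    have dA : DifferentiableOn ℂ (fun β => (euler (euler (euler X0)) β * t β
        + euler (euler X0) β * euler t β)
        + (euler (euler X0) β * euler t β + euler X0 β * euler (euler t) β)) V :=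
      ((dz3.mul ht).add (dz2.mul dt1)).add ((dz2.mul dt1).add (dz1.mul dt2))
    have dB : DifferentiableOn ℂ (fun β => (euler (euler X0) β * euler t β
        + euler X0 β * euler (euler t) β)
        + (euler X0 β * euler (euler t) β + X0 β * euler (euler (euler t)) β)) V :=
      ((dz2.mul dt1).add (dz1.mul dt2)).add ((dz1.mul dt2).add (hX0.mul dt3))
    have b2 := euler_add hVopen dA dB hα
    have b3 := euler_add hVopen ((dz3.fun_mul ht).fun_add (dz2.fun_mul dt1)) ((dz2.fun_mul dt1).fun_add (dz1.fun_mul dt2)) hα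
    have b4 := euler_add hVopen ((dz2.fun_mul dt1).fun_add (dz1.fun_mul dt2)) ((dz1.fun_mul dt2).fun_add (hX0.fun_mul dt3)) hα
    have b5 := euler_add hVopen (dz3.fun_mul ht) (dz2.fun_mul dt1) hα
    have b6 := euler_add hVopen (dz2.fun_mul dt1) (dz1.fun_mul dt2) hα
    have b7 := euler_add hVopen (dz1.fun_mul dt2) (hX0.fun_mul dt3) hα
    have b8 : euler (fun δ => euler (euler (euler X0)) δ * t δ) α =
        euler (euler (euler (euler X0))) α * t α + euler (euler (euler X0)) α * euler t α :=
      euler_mul hVopen dz3 ht hα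
    have b9 : euler (fun δ => euler (euler X0) δ * euler t δ) α =
        euler (euler (euler X0)) α * euler t α + euler (euler X0) α * euler (euler t) α :=
      euler_mul hVopen dz2 dt1 hα
    have b10 : euler (fun δ => euler X0 δ * euler (euler t) δ) α =
        euler (euler X0) α * euler (euler t) α + euler X0 α * euler (euler (euler t)) α :=
      euler_mul hVopen dz1 dt2 hα
    have b11 : euler (fun δ => X0 δ * euler (euler (euler t)) δ) α =
        euler X0 α * euler (euler (euler t)) α + X0 α * euler (euler (euler (euler t))) α :=
      euler_mul hVopen hX0 dt3 hα
    rw [b1, b2]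
    beta_reduce
    rw [b3, b4]
    beta_reduce
    rw [b5, b6, b7]
    beta_reduce
    rw [b8, b9, b10, b11]
  -- coefficients
  set E1 := c₁+c₂+c₃+c₄ with hE1
  set E2 := c₁*c₂+c₁*c₃+c₁*c₄+c₂*c₃+c₂*c₄+c₃*c₄ with hE2
  set E3 := c₁*c₂*c₃+c₁*c₂*c₄+c₁*c₃*c₄+c₂*c₃*c₄ with hE3
  set E4 := c₁*c₂*c₃*c₄ with hE4
  -- level-0 facts about the basic inverses and reps
  have q0i1 : QD V A X0 t 0 (fun α : ℂ => (1 - α)⁻¹) := ⟨hld.inv hV1, hi1A⟩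
  have q0iX : QD V A X0 t 0 (fun α => (X0 α)⁻¹) := ⟨hX0.inv hX0ne, hiXA⟩
  have q0Z1 : QD V A X0 t 0 ((fun α => (Ufun X0 t α)⁻¹) * Dop X0 t X0) :=
    qd_mul hVopen q0UI q0G1
  have q0Z2 : QD V A X0 t 0 ((fun α => (Ufun X0 t α)⁻¹) * DZ1) := qd_mul hVopen q0UI q0DZ1
  have q0Z3 : QD V A X0 t 0 ((fun α => (Ufun X0 t α)⁻¹) * DZ2) := qd_mul hVopen q0UI q0DZ2
  have q0S1 : QD V A X0 t 0 ((fun α => (Ufun X0 t α)⁻¹) * Dop X0 t (fun α => α * deriv t α)) :=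
    qd_mul hVopen q0UI q0H1
  have q0S2 : QD V A X0 t 0 ((fun α => (Ufun X0 t α)⁻¹) * DS1) := qd_mul hVopen q0UI q0DS1
  -- θ⁴X0 as an element of the algebra
  set Z4f : ℂ → ℂ := (fun α : ℂ => α) * (fun α : ℂ => (1 - α)⁻¹) *
      (constF E1 * ((fun α => (Ufun X0 t α)⁻¹) * DZ2)
        + constF E2 * ((fun α => (Ufun X0 t α)⁻¹) * DZ1)
        + constF E3 * ((fun α => (Ufun X0 t α)⁻¹) * Dop X0 t X0)
        + constF E4 * X0) with hZ4f
  have q0Z4 : QD V A X0 t 0 Z4f := by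
    rw [hZ4f]
    exact qd_mul hVopen (qd_mul hVopen q0id q0i1)
      (qd_add hVopen (qd_add hVopen (qd_add hVopen
        (qd_mul hVopen (qd_const 0 E1) q0Z3)
        (qd_mul hVopen (qd_const 0 E2) q0Z2))
        (qd_mul hVopen (qd_const 0 E3) q0Z1))
        (qd_mul hVopen (qd_const 0 E4) q0X0))
  have hz4 : ∀ α ∈ V, euler (euler (euler (euler X0))) α = Z4f α := by
    intro α hα
    have k1 := hODE1 α hα
    have key : (1 - α) * euler (euler (euler (euler X0))) α =
        α * (E1 * euler (euler (euler X0)) α + E2 * euler (euler X0) α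
          + E3 * euler X0 α + E4 * X0 α) := by linear_combination k1
    rw [hZ4f]
    simp only [Pi.mul_apply, Pi.add_apply, constF]
    rw [← hz3 α hα, ← hz2 α hα, ← hz1 α hα]
    have h1 := hV1 α hα
    field_simp
    linear_combination key
  -- θ³(θt) as an element of the algebra
  set S3f : ℂ → ℂ := (fun α => (X0 α)⁻¹) * (fun α : ℂ => (1 - α)⁻¹) *
      ((fun α : ℂ => α) * (constF E1 * (constF 3 * (((fun α => (Ufun X0 t α)⁻¹) * DZ1) * (fun α => α * deriv t α))
            + constF 3 * (((fun α => (Ufun X0 t α)⁻¹) * Dop X0 t X0) * ((fun α => (Ufun X0 t α)⁻¹) * Dop X0 t (fun α => α * deriv t α)))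
            + X0 * ((fun α => (Ufun X0 t α)⁻¹) * DS1))
          + constF E2 * (constF 2 * (((fun α => (Ufun X0 t α)⁻¹) * Dop X0 t X0) * (fun α => α * deriv t α))
            + X0 * ((fun α => (Ufun X0 t α)⁻¹) * Dop X0 t (fun α => α * deriv t α)))
          + constF E3 * (X0 * (fun α => α * deriv t α)))
        - (constF 1 - (fun α : ℂ => α)) *
          (constF 4 * (((fun α => (Ufun X0 t α)⁻¹) * DZ2) * (fun α => α * deriv t α))
            + constF 6 * (((fun α => (Ufun X0 t α)⁻¹) * DZ1) * ((fun α => (Ufun X0 t α)⁻¹) * Dop X0 t (fun α => α * deriv t α)))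
            + constF 4 * (((fun α => (Ufun X0 t α)⁻¹) * Dop X0 t X0) * ((fun α => (Ufun X0 t α)⁻¹) * DS1)))) with hS3f
  have q0S3 : QD V A X0 t 0 S3f := by
    rw [hS3f]
    exact qd_mul hVopen (qd_mul hVopen q0iX q0i1)
      (qd_sub hVopen
        (qd_mul hVopen q0id
          (qd_add hVopen (qd_add hVopen
            (qd_mul hVopen (qd_const 0 E1) (qd_add hVopen (qd_add hVopen
              (qd_mul hVopen (qd_const 0 3) (qd_mul hVopen q0Z2 q0s0))
              (qd_mul hVopen (qd_const 0 3) (qd_mul hVopen q0Z1 q0S1)))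
              (qd_mul hVopen q0X0 q0S2)))
            (qd_mul hVopen (qd_const 0 E2) (qd_add hVopen
              (qd_mul hVopen (qd_const 0 2) (qd_mul hVopen q0Z1 q0s0))
              (qd_mul hVopen q0X0 q0S1))))
            (qd_mul hVopen (qd_const 0 E3) (qd_mul hVopen q0X0 q0s0))))
        (qd_mul hVopen (qd_sub hVopen (qd_const 0 1) q0id)
          (qd_add hVopen (qd_add hVopen
            (qd_mul hVopen (qd_const 0 4) (qd_mul hVopen q0Z3 q0s0))
            (qd_mul hVopen (qd_const 0 6) (qd_mul hVopen q0Z2 q0S1)))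
            (qd_mul hVopen (qd_const 0 4) (qd_mul hVopen q0Z1 q0S2)))))
  have hs3 : ∀ α ∈ V, euler (euler (euler (euler t))) α = S3f α := by
    intro α hα
    have k1 := hODE1 α hα
    have k2 := hODE2 α hα
    rw [hw4 α hα, hw3 α hα, hw2 α hα, hw1 α hα] at k2
    have key : (1 - α) * (X0 α * euler (euler (euler (euler t))) α) =
        α * (E1 * (3 * (euler (euler X0) α * euler t α) + 3 * (euler X0 α * euler (euler t) α)
            + X0 α * euler (euler (euler t)) α)
          + E2 * (2 * (euler X0 α * euler t α) + X0 α * euler (euler t) α)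
          + E3 * (X0 α * euler t α))
        - (1 - α) * (4 * (euler (euler (euler X0)) α * euler t α)
          + 6 * (euler (euler X0) α * euler (euler t) α)
          + 4 * (euler X0 α * euler (euler (euler t)) α)) := by
      linear_combination k2 - t α * k1
    rw [hS3f]
    simp only [Pi.mul_apply, Pi.add_apply, Pi.sub_apply, constF]
    rw [← hs2 α hα, ← hs1 α hα, ← hz3 α hα, ← hz2 α hα, ← hz1 α hα]
    rw [show α * deriv t α = euler t α from rfl]
    have h1 := hV1 α hα
    have hx := hX0ne α hα
    field_simp
    linear_combination key
  -- 𝒟 of 𝒟²(θt) : the second hard generator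
  have dDU : DifferentiableOn ℂ DU V := q1DU.obj.1
  have dDDU : DifferentiableOn ℂ DDU V := q0DDU.1
  have m1s : ∀ α ∈ V, Dop X0 t (Dop X0 t (fun α => α * deriv t α)) α =
      DU α * euler (euler t) α + Ufun X0 t α * (Ufun X0 t α * euler (euler (euler t)) α) := by
    intro α hα
    have e0 : Dop X0 t (Dop X0 t (fun α => α * deriv t α)) α =
        Dop X0 t (fun β => Ufun X0 t β * euler (euler t) β) α := rfl
    have e1 : Dop X0 t (fun β => Ufun X0 t β * euler (euler t) β) α =
        Dop X0 t (Ufun X0 t) α * euler (euler t) α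
        + Ufun X0 t α * Dop X0 t (euler (euler t)) α := dop_mul hVopen hUd dt2 hα
    rw [e0, e1, hDU hα,
      show Dop X0 t (euler (euler t)) α = Ufun X0 t α * euler (euler (euler t)) α from rfl]
  set T2f : ℂ → ℂ := DDU * ((fun α => (Ufun X0 t α)⁻¹) * Dop X0 t (fun α => α * deriv t α))
      + DU * (Ufun X0 t * ((fun α => (Ufun X0 t α)⁻¹) * DS1))
      + (DU * (Ufun X0 t * ((fun α => (Ufun X0 t α)⁻¹) * DS1))
        + Ufun X0 t * (DU * ((fun α => (Ufun X0 t α)⁻¹) * DS1)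
          + Ufun X0 t * (Ufun X0 t * S3f))) with hT2f
  have q0T2 : QD V A X0 t 0 T2f := by
    rw [hT2f]
    exact qd_add hVopen (qd_add hVopen (qd_mul hVopen q0DDU q0S1)
      (qd_mul hVopen q0DU (qd_mul hVopen q0U q0S2)))
      (qd_add hVopen (qd_mul hVopen q0DU (qd_mul hVopen q0U q0S2))
        (qd_mul hVopen q0U (qd_add hVopen (qd_mul hVopen q0DU q0S2)
          (qd_mul hVopen q0U (qd_mul hVopen q0U q0S3)))))
  have hDH2 : Set.EqOn (Dop X0 t (Dop X0 t (Dop X0 t (fun α => α * deriv t α)))) T2f V := by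
    intro α hα
    have c0 : Dop X0 t (Dop X0 t (Dop X0 t (fun α => α * deriv t α))) α =
        Dop X0 t (fun β => DU β * euler (euler t) β
          + Ufun X0 t β * (Ufun X0 t β * euler (euler (euler t)) β)) α :=
      dop_congr hVopen (fun β hβ => m1s β hβ) hα
    have c1 : Dop X0 t (fun β => DU β * euler (euler t) β
          + Ufun X0 t β * (Ufun X0 t β * euler (euler (euler t)) β)) α =
        Dop X0 t (fun β => DU β * euler (euler t) β) α
        + Dop X0 t (fun β => Ufun X0 t β * (Ufun X0 t β * euler (euler (euler t)) β)) α :=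
      dop_add hVopen (dDU.mul dt2) (hUd.mul (hUd.mul dt3)) hα
    have c2 : Dop X0 t (fun β => DU β * euler (euler t) β) α =
        Dop X0 t DU α * euler (euler t) α + DU α * Dop X0 t (euler (euler t)) α :=
      dop_mul hVopen dDU dt2 hα
    have c3 : Dop X0 t (fun β => Ufun X0 t β * (Ufun X0 t β * euler (euler (euler t)) β)) α =
        Dop X0 t (Ufun X0 t) α * (Ufun X0 t α * euler (euler (euler t)) α)
        + Ufun X0 t α * Dop X0 t (fun β => Ufun X0 t β * euler (euler (euler t)) β) α :=
      dop_mul hVopen hUd (hUd.mul dt3) hα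
    have c4 : Dop X0 t (fun β => Ufun X0 t β * euler (euler (euler t)) β) α =
        Dop X0 t (Ufun X0 t) α * euler (euler (euler t)) α
        + Ufun X0 t α * Dop X0 t (euler (euler (euler t))) α :=
      dop_mul hVopen hUd dt3 hα
    rw [c0, c1, c2, c3, c4, hDDU hα, hDU hα,
      show Dop X0 t (euler (euler t)) α = Ufun X0 t α * euler (euler (euler t)) α from rfl,
      show Dop X0 t (euler (euler (euler t))) α
        = Ufun X0 t α * euler (euler (euler (euler t))) α from rfl,
      hs3 α hα, hs2 α hα, hs1 α hα, hT2f]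
    simp only [Pi.mul_apply, Pi.add_apply]
  have q1H2 : QD V A X0 t 1 (Dop X0 t (Dop X0 t (fun α => α * deriv t α))) :=
    ⟨q0H2, _, q0T2, hDH2⟩
  have q2H1 : QD V A X0 t 2 (Dop X0 t (fun α => α * deriv t α)) :=
    ⟨q0H1, _, q1H2, Set.eqOn_refl _ _⟩
  have q3s0 : QD V A X0 t 3 (fun α => α * deriv t α) := ⟨q0s0, _, q2H1, Set.eqOn_refl _ _⟩
  have q3id : QD V A X0 t 3 (fun α : ℂ => α) := ⟨q0id, _, qd_mul hVopen q2U q2id, hDid⟩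
  have q3l : QD V A X0 t 3 (fun α : ℂ => 1 - α) :=
    ⟨q0l, _, qd_neg hVopen (qd_mul hVopen q2U q2id), hDl⟩
  have q3U : QD V A X0 t 3 (Ufun X0 t) :=
    qd_subj hUfactor (qd_mul hVopen q3l
      (qd_mul hVopen (qd_mul hVopen q3X0 q3s0) (qd_mul hVopen q3X0 q3s0)))
  obtain ⟨DU2, q2DU2, hDU2⟩ := q3U.2
  obtain ⟨DDU2, q1DDU2, hDDU2⟩ := q2DU2.2
  obtain ⟨DDDU2, q0DDDU2, hDDDU2⟩ := q1DDU2.2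
  have q0DU2 : QD V A X0 t 0 DU2 := qd_down (qd_down q2DU2)
  have q0DDU2 : QD V A X0 t 0 DDU2 := qd_down q1DDU2
  have dDU2 : DifferentiableOn ℂ DU2 V := q0DU2.1
  have dDDU2 : DifferentiableOn ℂ DDU2 V := q0DDU2.1
  -- 𝒟 of 𝒟³X0 : the first hard generator
  have m1x : ∀ α ∈ V, Dop X0 t (Dop X0 t X0) α =
      DU2 α * euler X0 α + Ufun X0 t α * (Ufun X0 t α * euler (euler X0) α) := by
    intro α hα
    have e0 : Dop X0 t (Dop X0 t X0) α =
        Dop X0 t (fun β => Ufun X0 t β * euler X0 β) α := rfl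
    have e1 : Dop X0 t (fun β => Ufun X0 t β * euler X0 β) α =
        Dop X0 t (Ufun X0 t) α * euler X0 α + Ufun X0 t α * Dop X0 t (euler X0) α :=
      dop_mul hVopen hUd dz1 hα
    rw [e0, e1, hDU2 hα,
      show Dop X0 t (euler X0) α = Ufun X0 t α * euler (euler X0) α from rfl]
  have m2x : ∀ α ∈ V, Dop X0 t (Dop X0 t (Dop X0 t X0)) α =
      DDU2 α * euler X0 α + DU2 α * (Ufun X0 t α * euler (euler X0) α)
      + (DU2 α * (Ufun X0 t α * euler (euler X0) α)
        + Ufun X0 t α * (DU2 α * euler (euler X0) α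
          + Ufun X0 t α * (Ufun X0 t α * euler (euler (euler X0)) α))) := by
    intro α hα
    have c0 : Dop X0 t (Dop X0 t (Dop X0 t X0)) α =
        Dop X0 t (fun β => DU2 β * euler X0 β
          + Ufun X0 t β * (Ufun X0 t β * euler (euler X0) β)) α :=
      dop_congr hVopen (fun β hβ => m1x β hβ) hα
    have c1 : Dop X0 t (fun β => DU2 β * euler X0 β
          + Ufun X0 t β * (Ufun X0 t β * euler (euler X0) β)) α =
        Dop X0 t (fun β => DU2 β * euler X0 β) α
        + Dop X0 t (fun β => Ufun X0 t β * (Ufun X0 t β * euler (euler X0) β)) α :=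
      dop_add hVopen (dDU2.mul dz1) (hUd.mul (hUd.mul dz2)) hα
    have c2 : Dop X0 t (fun β => DU2 β * euler X0 β) α =
        Dop X0 t DU2 α * euler X0 α + DU2 α * Dop X0 t (euler X0) α :=
      dop_mul hVopen dDU2 dz1 hα
    have c3 : Dop X0 t (fun β => Ufun X0 t β * (Ufun X0 t β * euler (euler X0) β)) α =
        Dop X0 t (Ufun X0 t) α * (Ufun X0 t α * euler (euler X0) α)
        + Ufun X0 t α * Dop X0 t (fun β => Ufun X0 t β * euler (euler X0) β) α :=
      dop_mul hVopen hUd (hUd.mul dz2) hα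
    have c4 : Dop X0 t (fun β => Ufun X0 t β * euler (euler X0) β) α =
        Dop X0 t (Ufun X0 t) α * euler (euler X0) α
        + Ufun X0 t α * Dop X0 t (euler (euler X0)) α :=
      dop_mul hVopen hUd dz2 hα
    rw [c0, c1, c2, c3, c4, hDDU2 hα, hDU2 hα,
      show Dop X0 t (euler X0) α = Ufun X0 t α * euler (euler X0) α from rfl,
      show Dop X0 t (euler (euler X0)) α = Ufun X0 t α * euler (euler (euler X0)) α from rfl]
  set T1f : ℂ → ℂ :=
      (DDDU2 * ((fun α => (Ufun X0 t α)⁻¹) * Dop X0 t X0)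
        + DDU2 * (Ufun X0 t * ((fun α => (Ufun X0 t α)⁻¹) * DZ1)))
      + (DDU2 * (Ufun X0 t * ((fun α => (Ufun X0 t α)⁻¹) * DZ1))
        + DU2 * (DU2 * ((fun α => (Ufun X0 t α)⁻¹) * DZ1)
          + Ufun X0 t * (Ufun X0 t * ((fun α => (Ufun X0 t α)⁻¹) * DZ2))))
      + ((DDU2 * (Ufun X0 t * ((fun α => (Ufun X0 t α)⁻¹) * DZ1))
        + DU2 * (DU2 * ((fun α => (Ufun X0 t α)⁻¹) * DZ1)
          + Ufun X0 t * (Ufun X0 t * ((fun α => (Ufun X0 t α)⁻¹) * DZ2))))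
        + (DU2 * (DU2 * ((fun α => (Ufun X0 t α)⁻¹) * DZ1)
            + Ufun X0 t * (Ufun X0 t * ((fun α => (Ufun X0 t α)⁻¹) * DZ2)))
          + Ufun X0 t * ((DDU2 * ((fun α => (Ufun X0 t α)⁻¹) * DZ1)
              + DU2 * (Ufun X0 t * ((fun α => (Ufun X0 t α)⁻¹) * DZ2)))
            + (DU2 * (Ufun X0 t * ((fun α => (Ufun X0 t α)⁻¹) * DZ2))
              + Ufun X0 t * (DU2 * ((fun α => (Ufun X0 t α)⁻¹) * DZ2)
                + Ufun X0 t * (Ufun X0 t * Z4f)))))) with hT1f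
  have q0T1 : QD V A X0 t 0 T1f := by
    rw [hT1f]
    exact qd_add hVopen (qd_add hVopen
      (qd_add hVopen (qd_mul hVopen q0DDDU2 q0Z1)
        (qd_mul hVopen q0DDU2 (qd_mul hVopen q0U q0Z2)))
      (qd_add hVopen (qd_mul hVopen q0DDU2 (qd_mul hVopen q0U q0Z2))
        (qd_mul hVopen q0DU2 (qd_add hVopen (qd_mul hVopen q0DU2 q0Z2)
          (qd_mul hVopen q0U (qd_mul hVopen q0U q0Z3))))))
      (qd_add hVopen
        (qd_add hVopen (qd_mul hVopen q0DDU2 (qd_mul hVopen q0U q0Z2))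
          (qd_mul hVopen q0DU2 (qd_add hVopen (qd_mul hVopen q0DU2 q0Z2)
            (qd_mul hVopen q0U (qd_mul hVopen q0U q0Z3)))))
        (qd_add hVopen
          (qd_mul hVopen q0DU2 (qd_add hVopen (qd_mul hVopen q0DU2 q0Z2)
            (qd_mul hVopen q0U (qd_mul hVopen q0U q0Z3))))
          (qd_mul hVopen q0U (qd_add hVopen
            (qd_add hVopen (qd_mul hVopen q0DDU2 q0Z2)
              (qd_mul hVopen q0DU2 (qd_mul hVopen q0U q0Z3)))
            (qd_add hVopen (qd_mul hVopen q0DU2 (qd_mul hVopen q0U q0Z3))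
              (qd_mul hVopen q0U (qd_add hVopen (qd_mul hVopen q0DU2 q0Z3)
                (qd_mul hVopen q0U (qd_mul hVopen q0U q0Z4)))))))))
  have hDG3 : Set.EqOn (Dop X0 t (Dop X0 t (Dop X0 t (Dop X0 t X0)))) T1f V := by
    intro α hα
    have c0 : Dop X0 t (Dop X0 t (Dop X0 t (Dop X0 t X0))) α =
        Dop X0 t (fun β => DDU2 β * euler X0 β + DU2 β * (Ufun X0 t β * euler (euler X0) β)
          + (DU2 β * (Ufun X0 t β * euler (euler X0) β)
            + Ufun X0 t β * (DU2 β * euler (euler X0) β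
              + Ufun X0 t β * (Ufun X0 t β * euler (euler (euler X0)) β)))) α :=
      dop_congr hVopen (fun β hβ => m2x β hβ) hα
    have dP : DifferentiableOn ℂ (fun β => DDU2 β * euler X0 β) V := dDDU2.mul dz1
    have dQ : DifferentiableOn ℂ (fun β => DU2 β * (Ufun X0 t β * euler (euler X0) β)) V :=
      dDU2.mul (hUd.mul dz2)
    have dS : DifferentiableOn ℂ (fun β => Ufun X0 t β * (DU2 β * euler (euler X0) β
        + Ufun X0 t β * (Ufun X0 t β * euler (euler (euler X0)) β))) V :=
      hUd.mul ((dDU2.mul dz2).add (hUd.mul (hUd.mul dz3)))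
    have c1 : Dop X0 t (fun β => DDU2 β * euler X0 β + DU2 β * (Ufun X0 t β * euler (euler X0) β)
          + (DU2 β * (Ufun X0 t β * euler (euler X0) β)
            + Ufun X0 t β * (DU2 β * euler (euler X0) β
              + Ufun X0 t β * (Ufun X0 t β * euler (euler (euler X0)) β)))) α =
        Dop X0 t (fun β => DDU2 β * euler X0 β + DU2 β * (Ufun X0 t β * euler (euler X0) β)) α
        + Dop X0 t (fun β => DU2 β * (Ufun X0 t β * euler (euler X0) β)
            + Ufun X0 t β * (DU2 β * euler (euler X0) β
              + Ufun X0 t β * (Ufun X0 t β * euler (euler (euler X0)) β))) α :=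
      dop_add hVopen (dP.add dQ) (dQ.add dS) hα
    have c2 : Dop X0 t (fun β => DDU2 β * euler X0 β
          + DU2 β * (Ufun X0 t β * euler (euler X0) β)) α =
        Dop X0 t (fun β => DDU2 β * euler X0 β) α
        + Dop X0 t (fun β => DU2 β * (Ufun X0 t β * euler (euler X0) β)) α :=
      dop_add hVopen dP dQ hα
    have c3 : Dop X0 t (fun β => DU2 β * (Ufun X0 t β * euler (euler X0) β)
            + Ufun X0 t β * (DU2 β * euler (euler X0) β
              + Ufun X0 t β * (Ufun X0 t β * euler (euler (euler X0)) β))) α =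
        Dop X0 t (fun β => DU2 β * (Ufun X0 t β * euler (euler X0) β)) α
        + Dop X0 t (fun β => Ufun X0 t β * (DU2 β * euler (euler X0) β
              + Ufun X0 t β * (Ufun X0 t β * euler (euler (euler X0)) β))) α :=
      dop_add hVopen dQ dS hα
    have c4 : Dop X0 t (fun β => DDU2 β * euler X0 β) α =
        Dop X0 t DDU2 α * euler X0 α + DDU2 α * Dop X0 t (euler X0) α :=
      dop_mul hVopen dDDU2 dz1 hα
    have c5 : Dop X0 t (fun β => DU2 β * (Ufun X0 t β * euler (euler X0) β)) α =
        Dop X0 t DU2 α * (Ufun X0 t α * euler (euler X0) α)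
        + DU2 α * Dop X0 t (fun β => Ufun X0 t β * euler (euler X0) β) α :=
      dop_mul hVopen dDU2 (hUd.mul dz2) hα
    have c6 : Dop X0 t (fun β => Ufun X0 t β * euler (euler X0) β) α =
        Dop X0 t (Ufun X0 t) α * euler (euler X0) α
        + Ufun X0 t α * Dop X0 t (euler (euler X0)) α :=
      dop_mul hVopen hUd dz2 hα
    have c7 : Dop X0 t (fun β => Ufun X0 t β * (DU2 β * euler (euler X0) β
              + Ufun X0 t β * (Ufun X0 t β * euler (euler (euler X0)) β))) α =
        Dop X0 t (Ufun X0 t) α * (DU2 α * euler (euler X0) α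
          + Ufun X0 t α * (Ufun X0 t α * euler (euler (euler X0)) α))
        + Ufun X0 t α * Dop X0 t (fun β => DU2 β * euler (euler X0) β
              + Ufun X0 t β * (Ufun X0 t β * euler (euler (euler X0)) β)) α :=
      dop_mul hVopen hUd ((dDU2.mul dz2).add (hUd.mul (hUd.mul dz3))) hα
    have c8 : Dop X0 t (fun β => DU2 β * euler (euler X0) β
              + Ufun X0 t β * (Ufun X0 t β * euler (euler (euler X0)) β)) α =
        Dop X0 t (fun β => DU2 β * euler (euler X0) β) α
        + Dop X0 t (fun β => Ufun X0 t β * (Ufun X0 t β * euler (euler (euler X0)) β)) α :=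
      dop_add hVopen (dDU2.mul dz2) (hUd.mul (hUd.mul dz3)) hα
    have c9 : Dop X0 t (fun β => DU2 β * euler (euler X0) β) α =
        Dop X0 t DU2 α * euler (euler X0) α + DU2 α * Dop X0 t (euler (euler X0)) α :=
      dop_mul hVopen dDU2 dz2 hα
    have c10 : Dop X0 t (fun β => Ufun X0 t β * (Ufun X0 t β * euler (euler (euler X0)) β)) α =
        Dop X0 t (Ufun X0 t) α * (Ufun X0 t α * euler (euler (euler X0)) α)
        + Ufun X0 t α * Dop X0 t (fun β => Ufun X0 t β * euler (euler (euler X0)) β) α :=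
      dop_mul hVopen hUd (hUd.mul dz3) hα
    have c11 : Dop X0 t (fun β => Ufun X0 t β * euler (euler (euler X0)) β) α =
        Dop X0 t (Ufun X0 t) α * euler (euler (euler X0)) α
        + Ufun X0 t α * Dop X0 t (euler (euler (euler X0))) α :=
      dop_mul hVopen hUd dz3 hα
    rw [c0, c1, c2, c3, c4, c5, c6, c7, c8, c9, c10, c11, hDDDU2 hα, hDDU2 hα, hDU2 hα,
      show Dop X0 t (euler X0) α = Ufun X0 t α * euler (euler X0) α from rfl,
      show Dop X0 t (euler (euler X0)) α = Ufun X0 t α * euler (euler (euler X0)) α from rfl,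
      show Dop X0 t (euler (euler (euler X0))) α
        = Ufun X0 t α * euler (euler (euler (euler X0))) α from rfl,
      hz4 α hα, hz3 α hα, hz2 α hα, hz1 α hα, hT1f]
    simp only [Pi.mul_apply, Pi.add_apply]
  have q1G3 : QD V A X0 t 1 (Dop X0 t (Dop X0 t (Dop X0 t X0))) := ⟨q0G3, _, q0T1, hDG3⟩
  -- the remaining generators at level 1
  have q1ia : QD V A X0 t 1 (fun α : ℂ => α⁻¹) := qd_inv hVopen q1id hα0 hiaA
  have q1i1 : QD V A X0 t 1 (fun α : ℂ => (1 - α)⁻¹) := qd_inv hVopen q1l hV1 hi1A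
  have q1iX : QD V A X0 t 1 (fun α => (X0 α)⁻¹) := qd_inv hVopen q1X0 hX0ne hiXA
  have q1it : QD V A X0 t 1 (fun α => (α * deriv t α)⁻¹) := qd_inv hVopen q1s0 hθtne hitA
  have q1G1 : QD V A X0 t 1 (Dop X0 t X0) := ⟨q0G1, _, q0G2, Set.eqOn_refl _ _⟩
  -- conclusion by induction over the adjoined algebra
  intro f hf
  have hQ : QD V A X0 t 1 f := by
    refine Algebra.adjoin_induction (s := genSet X0 t) (p := fun g _ => QD V A X0 t 1 g)
      ?_ ?_ ?_ ?_ hf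
    · intro g hg
      simp only [genSet, Set.mem_insert_iff, Set.mem_singleton_iff] at hg
      rcases hg with rfl|rfl|rfl|rfl|rfl|rfl|rfl|rfl|rfl|rfl|rfl|rfl
      exacts [q1id, q1ia, q1i1, q1X0, q1iX, q1s0, q1it, q1G1, q1G2, q1G3, q1H1, q1H2]
    · intro r
      exact qd_subj (show constF r = _ from rfl) (qd_const 1 r)
    · intro x y _ _ hx hy
      exact qd_add hVopen hx hy
    · intro x y _ _ hx hy
      exact qd_mul hVopen hx hy
  obtain ⟨F, q0F, hF⟩ := hQ.2
  exact ⟨F, q0F.2, hF⟩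
end

section
/- Let U ⊆ ℂ be open, K : U → ℝ smooth, and suppose G := ∂_z∂_{z̄}K is nowhere vanishing. Set Γ := G⁻¹·∂_zG and let C : U → ℂ be holomorphic and nowhere vanishing. Assume the one-dimensional special geometry relation ∂_{z̄}Γ = 2G − C·C̄·e^{2K}·G⁻² holds on U. Then the function Φ := ∂_zΓ + Γ² − 2Γ·∂_zK − 4·∂_z∂_zK + 2(∂_zK)² + (C′/C)·(2∂_zK − Γ) satisfies ∂_{z̄}Φ = 0 on U; that is, Φ is holomorphic. -/
open Complex Filter Topology

/-- The Wirtinger derivative `∂_z f = (1/2)(∂_x f − i·∂_y f)`. -/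
noncomputable def wirtDz (f : ℂ → ℂ) : ℂ → ℂ :=
  fun z => (fderiv ℝ f z 1 - Complex.I * fderiv ℝ f z Complex.I) / 2

/-- The Wirtinger derivative `∂_z̄ f = (1/2)(∂_x f + i·∂_y f)`. -/
noncomputable def wirtDzbar (f : ℂ → ℂ) : ℂ → ℂ :=
  fun z => (fderiv ℝ f z 1 + Complex.I * fderiv ℝ f z Complex.I) / 2

section Lemmas

variable {f g : ℂ → ℂ} {z : ℂ} {U : Set ℂ}

lemma two_le_inf' : (2 : WithTop ℕ∞) ≤ ((⊤:ℕ∞) : WithTop ℕ∞) := by decide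

lemma wirtDz_congr (h : f =ᶠ[nhds z] g) : wirtDz f z = wirtDz g z := by
  simp only [wirtDz, h.fderiv_eq]

lemma wirtDzbar_congr (h : f =ᶠ[nhds z] g) : wirtDzbar f z = wirtDzbar g z := by
  simp only [wirtDzbar, h.fderiv_eq]

lemma wirtDz_add (hf : DifferentiableAt ℝ f z) (hg : DifferentiableAt ℝ g z) :
    wirtDz (fun w => f w + g w) z = wirtDz f z + wirtDz g z := by
  simp only [wirtDz, fderiv_fun_add hf hg, ContinuousLinearMap.add_apply]; ring

lemma wirtDzbar_add (hf : DifferentiableAt ℝ f z) (hg : DifferentiableAt ℝ g z) :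
    wirtDzbar (fun w => f w + g w) z = wirtDzbar f z + wirtDzbar g z := by
  simp only [wirtDzbar, fderiv_fun_add hf hg, ContinuousLinearMap.add_apply]; ring

lemma wirtDz_sub (hf : DifferentiableAt ℝ f z) (hg : DifferentiableAt ℝ g z) :
    wirtDz (fun w => f w - g w) z = wirtDz f z - wirtDz g z := by
  simp only [wirtDz, fderiv_fun_sub hf hg, ContinuousLinearMap.sub_apply]; ring

lemma wirtDzbar_sub (hf : DifferentiableAt ℝ f z) (hg : DifferentiableAt ℝ g z) :
    wirtDzbar (fun w => f w - g w) z = wirtDzbar f z - wirtDzbar g z := by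
  simp only [wirtDzbar, fderiv_fun_sub hf hg, ContinuousLinearMap.sub_apply]; ring

lemma wirtDz_mul (hf : DifferentiableAt ℝ f z) (hg : DifferentiableAt ℝ g z) :
    wirtDz (fun w => f w * g w) z = wirtDz f z * g z + f z * wirtDz g z := by
  simp only [wirtDz, fderiv_fun_mul hf hg, ContinuousLinearMap.add_apply,
    ContinuousLinearMap.smul_apply, smul_eq_mul]; ring

lemma wirtDzbar_mul (hf : DifferentiableAt ℝ f z) (hg : DifferentiableAt ℝ g z) :
    wirtDzbar (fun w => f w * g w) z = wirtDzbar f z * g z + f z * wirtDzbar g z := by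
  simp only [wirtDzbar, fderiv_fun_mul hf hg, ContinuousLinearMap.add_apply,
    ContinuousLinearMap.smul_apply, smul_eq_mul]; ring

lemma wirtDz_const_mul (c : ℂ) (hf : DifferentiableAt ℝ f z) :
    wirtDz (fun w => c * f w) z = c * wirtDz f z := by
  simp only [wirtDz, fderiv_const_mul hf c, ContinuousLinearMap.smul_apply, smul_eq_mul]; ring

lemma wirtDzbar_const_mul (c : ℂ) (hf : DifferentiableAt ℝ f z) :
    wirtDzbar (fun w => c * f w) z = c * wirtDzbar f z := by
  simp only [wirtDzbar, fderiv_const_mul hf c, ContinuousLinearMap.smul_apply, smul_eq_mul]; ring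

lemma fderiv_comp_holo (hg : DifferentiableAt ℂ g (f z)) (hf : DifferentiableAt ℝ f z) (v : ℂ) :
    fderiv ℝ (fun w => g (f w)) z v = deriv g (f z) * fderiv ℝ f z v := by
  have h1 : HasFDerivAt g (((1 : ℂ →L[ℂ] ℂ).smulRight (deriv g (f z))).restrictScalars ℝ) (f z) :=
    (hg.hasDerivAt.hasFDerivAt).restrictScalars ℝ
  have h2 := (h1.comp z hf.hasFDerivAt).fderiv
  have h3 : (fun w => g (f w)) = g ∘ f := rfl
  rw [h3, h2]
  simp [mul_comm]

lemma wirtDz_comp (hg : DifferentiableAt ℂ g (f z)) (hf : DifferentiableAt ℝ f z) :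
    wirtDz (fun w => g (f w)) z = deriv g (f z) * wirtDz f z := by
  simp only [wirtDz, fderiv_comp_holo hg hf]; ring

lemma wirtDzbar_comp (hg : DifferentiableAt ℂ g (f z)) (hf : DifferentiableAt ℝ f z) :
    wirtDzbar (fun w => g (f w)) z = deriv g (f z) * wirtDzbar f z := by
  simp only [wirtDzbar, fderiv_comp_holo hg hf]; ring

lemma fderiv_holo (hf : DifferentiableAt ℂ f z) (v : ℂ) :
    fderiv ℝ f z v = v * deriv f z := by
  have h := (hf.hasDerivAt.hasFDerivAt.restrictScalars ℝ).fderiv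
  rw [h]; simp

lemma wirtDzbar_holo (hf : DifferentiableAt ℂ f z) : wirtDzbar f z = 0 := by
  simp only [wirtDzbar, fderiv_holo hf]
  ring_nf
  simp [Complex.I_sq]

lemma wirtDz_holo (hf : DifferentiableAt ℂ f z) : wirtDz f z = deriv f z := by
  simp only [wirtDz, fderiv_holo hf]
  ring_nf
  simp [Complex.I_sq]
  ring

lemma fderiv_conj_apply (hf : DifferentiableAt ℝ f z) (v : ℂ) :
    fderiv ℝ (fun w => (starRingEnd ℂ) (f w)) z v = (starRingEnd ℂ) (fderiv ℝ f z v) := by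
  have h2 := (Complex.conjCLE.toContinuousLinearMap.hasFDerivAt.comp z hf.hasFDerivAt).fderiv
  have h3 : (fun w => (starRingEnd ℂ) (f w)) = (⇑(Complex.conjCLE.toContinuousLinearMap)) ∘ f := rfl
  rw [h3, h2]; rfl

lemma wirtDz_conj (hf : DifferentiableAt ℝ f z) :
    wirtDz (fun w => (starRingEnd ℂ) (f w)) z = (starRingEnd ℂ) (wirtDzbar f z) := by
  simp only [wirtDz, wirtDzbar, fderiv_conj_apply hf, map_div₀, map_add, map_mul, Complex.conj_I,
    map_ofNat]
  ring

lemma wirtDzbar_conj (hf : DifferentiableAt ℝ f z) :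
    wirtDzbar (fun w => (starRingEnd ℂ) (f w)) z = (starRingEnd ℂ) (wirtDz f z) := by
  simp only [wirtDz, wirtDzbar, fderiv_conj_apply hf, map_div₀, map_sub, map_mul, Complex.conj_I,
    map_ofNat]
  ring

lemma wirtDz_contDiffOn (hU : IsOpen U)
    (hf : ContDiffOn ℝ ((⊤ : ℕ∞) : WithTop ℕ∞) f U) :
    ContDiffOn ℝ ((⊤ : ℕ∞) : WithTop ℕ∞) (wirtDz f) U := by
  have hF : ContDiffOn ℝ ((⊤ : ℕ∞) : WithTop ℕ∞) (fun x => fderiv ℝ f x) U :=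
    hf.fderiv_of_isOpen hU (by exact_mod_cast le_top)
  have h1 : ContDiffOn ℝ ((⊤ : ℕ∞) : WithTop ℕ∞) (fun x => fderiv ℝ f x 1) U :=
    hF.clm_apply contDiffOn_const
  have h2 : ContDiffOn ℝ ((⊤ : ℕ∞) : WithTop ℕ∞) (fun x => fderiv ℝ f x Complex.I) U :=
    hF.clm_apply contDiffOn_const
  exact ((h1.sub (ContDiffOn.mul contDiffOn_const h2)).div_const 2)

lemma wirtDzbar_contDiffOn (hU : IsOpen U)
    (hf : ContDiffOn ℝ ((⊤ : ℕ∞) : WithTop ℕ∞) f U) :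
    ContDiffOn ℝ ((⊤ : ℕ∞) : WithTop ℕ∞) (wirtDzbar f) U := by
  have hF : ContDiffOn ℝ ((⊤ : ℕ∞) : WithTop ℕ∞) (fun x => fderiv ℝ f x) U :=
    hf.fderiv_of_isOpen hU (by exact_mod_cast le_top)
  have h1 : ContDiffOn ℝ ((⊤ : ℕ∞) : WithTop ℕ∞) (fun x => fderiv ℝ f x 1) U :=
    hF.clm_apply contDiffOn_const
  have h2 : ContDiffOn ℝ ((⊤ : ℕ∞) : WithTop ℕ∞) (fun x => fderiv ℝ f x Complex.I) U :=
    hF.clm_apply contDiffOn_const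
  exact ((h1.add (ContDiffOn.mul contDiffOn_const h2)).div_const 2)

lemma diffAt_of_smoothOn (hU : IsOpen U) (hz : z ∈ U)
    (hf : ContDiffOn ℝ ((⊤ : ℕ∞) : WithTop ℕ∞) f U) : DifferentiableAt ℝ f z := by
  have := (hf.contDiffAt (hU.mem_nhds hz)).differentiableAt (by simp)
  exact this

lemma wirt_comm (hU : IsOpen U) (hz : z ∈ U)
    (hf : ContDiffOn ℝ ((⊤ : ℕ∞) : WithTop ℕ∞) f U) :
    wirtDzbar (wirtDz f) z = wirtDz (wirtDzbar f) z := by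
  set F := fun w => fderiv ℝ f w with hFdef
  have hFc : ContDiffOn ℝ ((⊤ : ℕ∞) : WithTop ℕ∞) F U :=
    hf.fderiv_of_isOpen hU (by exact_mod_cast le_top)
  have hFd : DifferentiableAt ℝ F z :=
    (hFc.contDiffAt (hU.mem_nhds hz)).differentiableAt (by simp)
  set B := fderiv ℝ F z with hBdef
  have hev : ∀ u v : ℂ, fderiv ℝ (fun w => F w u) z v = B v u := by
    intro u v
    have h := ((ContinuousLinearMap.apply ℝ ℂ u).hasFDerivAt.comp z hFd.hasFDerivAt).fderiv
    have h3 : (fun w => F w u) = (⇑(ContinuousLinearMap.apply ℝ ℂ u)) ∘ F := rfl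
    rw [h3, h]; rfl
  have hdu : ∀ u : ℂ, DifferentiableAt ℝ (fun w => F w u) z := by
    intro u
    exact ((ContinuousLinearMap.apply ℝ ℂ u).hasFDerivAt.comp z hFd.hasFDerivAt).differentiableAt
  have hsymm : B 1 Complex.I = B Complex.I 1 := by
    have hca : ContDiffAt ℝ 2 f z :=
      (hf.contDiffAt (hU.mem_nhds hz)).of_le two_le_inf'
    exact (hca.isSymmSndFDerivAt (by norm_num)) 1 Complex.I
  have hfz : ∀ v : ℂ, fderiv ℝ (wirtDz f) z v = (B v 1 - Complex.I * B v Complex.I) / 2 := by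
    intro v
    have e1 : wirtDz f = fun w => (2:ℂ)⁻¹ * ((fun w => F w 1) w - Complex.I * (fun w => F w Complex.I) w) := by
      funext w; simp [wirtDz, div_eq_inv_mul, hFdef]
    rw [e1, fderiv_const_mul ((hdu 1).fun_sub ((hdu Complex.I).const_mul _)),
      fderiv_fun_sub (hdu 1) ((hdu Complex.I).const_mul _), fderiv_const_mul (hdu Complex.I)]
    simp [hev]; ring
  have hfzb : ∀ v : ℂ, fderiv ℝ (wirtDzbar f) z v = (B v 1 + Complex.I * B v Complex.I) / 2 := by
    intro v
    have e1 : wirtDzbar f = fun w => (2:ℂ)⁻¹ * ((fun w => F w 1) w + Complex.I * (fun w => F w Complex.I) w) := by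
      funext w; simp [wirtDzbar, div_eq_inv_mul, hFdef]
    rw [e1, fderiv_const_mul ((hdu 1).fun_add ((hdu Complex.I).const_mul _)),
      fderiv_fun_add (hdu 1) ((hdu Complex.I).const_mul _), fderiv_const_mul (hdu Complex.I)]
    simp [hev]; ring
  simp only [wirtDz, wirtDzbar, hfz, hfzb]
  rw [hsymm]
  ring

end Lemmas

/-- Let `K` be a smooth real-valued function on an open `U ⊆ ℂ` with
`G := ∂_z∂_z̄K` nowhere vanishing, `Γ := G⁻¹∂_zG`, and let `C` be holomorphic and nowhere
vanishing on `U`.  If the special geometry relation `∂_z̄Γ = 2G − C·C̄·e^{2K}·G⁻²` holds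
on `U`, then `Φ := ∂_zΓ + Γ² − 2Γ∂_zK − 4∂_z∂_zK + 2(∂_zK)² + (C′/C)(2∂_zK − Γ)` is
holomorphic on `U`, i.e. `∂_z̄Φ = 0` on `U`. -/
theorem stmt_9 (U : Set ℂ) (hUopen : IsOpen U)
    (K : ℂ → ℂ) (hKsmooth : ContDiffOn ℝ ((⊤ : ℕ∞) : WithTop ℕ∞) K U) (hKreal : ∀ z ∈ U, (K z).im = 0)
    (G Γ Φ : ℂ → ℂ)
    (hGdef : G = wirtDz (wirtDzbar K))
    (hGne : ∀ z ∈ U, G z ≠ 0)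
    (hΓdef : Γ = fun z => (G z)⁻¹ * wirtDz G z)
    (C : ℂ → ℂ) (hC : DifferentiableOn ℂ C U) (hCne : ∀ z ∈ U, C z ≠ 0)
    (hrel : ∀ z ∈ U,
      wirtDzbar Γ z =
        2 * G z - C z * (starRingEnd ℂ) (C z) * Complex.exp (2 * K z) * ((G z) ^ 2)⁻¹)
    (hΦdef : Φ = fun z =>
      wirtDz Γ z + (Γ z) ^ 2 - 2 * Γ z * wirtDz K z - 4 * wirtDz (wirtDz K) z
        + 2 * (wirtDz K z) ^ 2 + (deriv C z / C z) * (2 * wirtDz K z - Γ z)) :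
    ∀ z ∈ U, wirtDzbar Φ z = 0 := by
  intro z hz
  -- smoothness facts
  have hDbKs := wirtDzbar_contDiffOn hUopen hKsmooth
  have hGs : ContDiffOn ℝ ((⊤ : ℕ∞) : WithTop ℕ∞) G U := by
    rw [hGdef]; exact wirtDz_contDiffOn hUopen hDbKs
  have hDKs := wirtDz_contDiffOn hUopen hKsmooth
  have hDDKs := wirtDz_contDiffOn hUopen hDKs
  have hDGs := wirtDz_contDiffOn hUopen hGs
  have hΓs : ContDiffOn ℝ ((⊤ : ℕ∞) : WithTop ℕ∞) Γ U := by
    rw [hΓdef]; exact (hGs.inv hGne).mul hDGs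
  have hDΓs := wirtDz_contDiffOn hUopen hΓs
  -- pointwise real differentiability
  have dK := diffAt_of_smoothOn hUopen hz hKsmooth
  have dDK := diffAt_of_smoothOn hUopen hz hDKs
  have dDDK := diffAt_of_smoothOn hUopen hz hDDKs
  have dG := diffAt_of_smoothOn hUopen hz hGs
  have dΓ := diffAt_of_smoothOn hUopen hz hΓs
  have dDΓ := diffAt_of_smoothOn hUopen hz hDΓs
  -- complex-analytic facts about C
  have hCz : DifferentiableAt ℂ C z := hC.differentiableAt (hUopen.mem_nhds hz)
  have hCan : AnalyticOnNhd ℂ C U := hC.analyticOnNhd hUopen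
  have hC'z : DifferentiableAt ℂ (deriv C) z := ((hCan.deriv) z hz).differentiableAt
  have hdiv : DifferentiableAt ℂ (fun w => deriv C w / C w) z := hC'z.div hCz (hCne z hz)
  have dC : DifferentiableAt ℝ C z := hCz.restrictScalars ℝ
  have dCb : DifferentiableAt ℝ (fun w => (starRingEnd ℂ) (C w)) z := by
    have h3 : (fun w => (starRingEnd ℂ) (C w)) = (⇑(Complex.conjCLE.toContinuousLinearMap)) ∘ C := rfl
    rw [h3]
    exact Complex.conjCLE.toContinuousLinearMap.differentiableAt.comp z dC
  have d2K : DifferentiableAt ℝ (fun w => 2 * K w) z := dK.const_mul 2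
  have hexpz : DifferentiableAt ℂ Complex.exp (2 * K z) := Complex.differentiable_exp _
  have dExp : DifferentiableAt ℝ (fun w => Complex.exp (2 * K w)) z := by
    have h3 : (fun w => Complex.exp (2 * K w)) = Complex.exp ∘ (fun w => 2 * K w) := rfl
    rw [h3]
    exact (hexpz.restrictScalars ℝ).comp z d2K
  have hG2ne : (G z) ^ 2 ≠ 0 := pow_ne_zero 2 (hGne z hz)
  have dG2 : DifferentiableAt ℝ (fun w => (G w) ^ 2) z := dG.pow 2
  have hinv : DifferentiableAt ℂ (fun x : ℂ => x⁻¹) ((G z) ^ 2) :=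
    (contDiffAt_inv ℂ hG2ne (n := 1)).differentiableAt one_ne_zero
  have dGinv2 : DifferentiableAt ℝ (fun w => ((G w) ^ 2)⁻¹) z := by
    have h3 : (fun w => ((G w) ^ 2)⁻¹) = (fun x : ℂ => x⁻¹) ∘ (fun w => (G w) ^ 2) := rfl
    rw [h3]
    exact (hinv.restrictScalars ℝ).comp z dG2
  -- eventual equalities near z
  have hDbDK_ev : wirtDzbar (wirtDz K) =ᶠ[nhds z] G := by
    filter_upwards [hUopen.eventually_mem hz] with w hw
    rw [wirt_comm hUopen hw hKsmooth, hGdef]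
  have e_DbDK : wirtDzbar (wirtDz K) z = G z := by
    rw [wirt_comm hUopen hz hKsmooth, hGdef]
  have hrel_ev : wirtDzbar Γ =ᶠ[nhds z]
      (fun w => 2 * G w - C w * (starRingEnd ℂ) (C w) * Complex.exp (2 * K w) * ((G w) ^ 2)⁻¹) := by
    filter_upwards [hUopen.eventually_mem hz] with w hw
    exact hrel w hw
  have hDGz : wirtDz G z = G z * Γ z := by
    rw [hΓdef]
    simp only []
    rw [← mul_assoc, mul_inv_cancel₀ (hGne z hz), one_mul]
  -- value computations for the pieces of ∂_z(∂_z̄ Γ)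
  have vC : wirtDz C z = deriv C z := wirtDz_holo hCz
  have vCb : wirtDz (fun w => (starRingEnd ℂ) (C w)) z = 0 := by
    rw [wirtDz_conj dC, wirtDzbar_holo hCz, map_zero]
  have dQ1 : DifferentiableAt ℝ (fun w => C w * (starRingEnd ℂ) (C w)) z := dC.mul dCb
  have dQ2 : DifferentiableAt ℝ (fun w => C w * (starRingEnd ℂ) (C w) * Complex.exp (2 * K w)) z :=
    dQ1.mul dExp
  have dQ3 : DifferentiableAt ℝ
      (fun w => C w * (starRingEnd ℂ) (C w) * Complex.exp (2 * K w) * ((G w) ^ 2)⁻¹) z :=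
    dQ2.mul dGinv2
  have d2G : DifferentiableAt ℝ (fun w => 2 * G w) z := dG.const_mul 2
  have vQ1 : wirtDz (fun w => C w * (starRingEnd ℂ) (C w)) z = deriv C z * (starRingEnd ℂ) (C z) := by
    rw [wirtDz_mul dC dCb, vC, vCb]; ring
  have vG2 : wirtDz (fun w => (G w) ^ 2) z = 2 * G z * (G z * Γ z) := by
    have h2 : (fun w => (G w) ^ 2) = fun w => G w * G w := by funext w; ring
    rw [h2, wirtDz_mul dG dG, hDGz]; ring
  have vInv : wirtDz (fun w => ((G w) ^ 2)⁻¹) z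
      = -(((G z) ^ 2) ^ 2)⁻¹ * (2 * G z * (G z * Γ z)) := by
    have h : wirtDz (fun w => ((G w) ^ 2)⁻¹) z
        = deriv (fun x : ℂ => x⁻¹) ((G z) ^ 2) * wirtDz (fun w => (G w) ^ 2) z :=
      wirtDz_comp hinv dG2
    rw [h, vG2, deriv_inv]
  have vExp : wirtDz (fun w => Complex.exp (2 * K w)) z
      = Complex.exp (2 * K z) * (2 * wirtDz K z) := by
    have h : wirtDz (fun w => Complex.exp (2 * K w)) z
        = deriv Complex.exp (2 * K z) * wirtDz (fun w => 2 * K w) z :=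
      wirtDz_comp hexpz d2K
    rw [h, Complex.deriv_exp, wirtDz_const_mul 2 dK]
  have vQ2 : wirtDz (fun w => C w * (starRingEnd ℂ) (C w) * Complex.exp (2 * K w)) z
      = deriv C z * (starRingEnd ℂ) (C z) * Complex.exp (2 * K z)
        + C z * (starRingEnd ℂ) (C z) * (Complex.exp (2 * K z) * (2 * wirtDz K z)) := by
    have h : wirtDz (fun w => C w * (starRingEnd ℂ) (C w) * Complex.exp (2 * K w)) z
        = wirtDz (fun w => C w * (starRingEnd ℂ) (C w)) z * Complex.exp (2 * K z)
          + (C z * (starRingEnd ℂ) (C z)) * wirtDz (fun w => Complex.exp (2 * K w)) z :=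
      wirtDz_mul dQ1 dExp
    rw [h, vQ1, vExp]
  have vQ3 : wirtDz (fun w => C w * (starRingEnd ℂ) (C w) * Complex.exp (2 * K w) * ((G w) ^ 2)⁻¹) z
      = (deriv C z * (starRingEnd ℂ) (C z) * Complex.exp (2 * K z)
          + C z * (starRingEnd ℂ) (C z) * (Complex.exp (2 * K z) * (2 * wirtDz K z))) * ((G z) ^ 2)⁻¹
        + (C z * (starRingEnd ℂ) (C z) * Complex.exp (2 * K z))
            * (-(((G z) ^ 2) ^ 2)⁻¹ * (2 * G z * (G z * Γ z))) := by
    have h : wirtDz (fun w => C w * (starRingEnd ℂ) (C w) * Complex.exp (2 * K w) * ((G w) ^ 2)⁻¹) z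
        = wirtDz (fun w => C w * (starRingEnd ℂ) (C w) * Complex.exp (2 * K w)) z * ((G z) ^ 2)⁻¹
          + (C z * (starRingEnd ℂ) (C z) * Complex.exp (2 * K z))
              * wirtDz (fun w => ((G w) ^ 2)⁻¹) z :=
      wirtDz_mul dQ2 dGinv2
    rw [h, vQ2, vInv]
  have v2G : wirtDz (fun w => 2 * G w) z = 2 * (G z * Γ z) := by
    rw [wirtDz_const_mul 2 dG, hDGz]
  -- term 1 : ∂_z̄ ∂_z Γ
  have eT1 : wirtDzbar (wirtDz Γ) z
      = 2 * (G z * Γ z)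
        - ((deriv C z * (starRingEnd ℂ) (C z) * Complex.exp (2 * K z)
            + C z * (starRingEnd ℂ) (C z) * (Complex.exp (2 * K z) * (2 * wirtDz K z))) * ((G z) ^ 2)⁻¹
          + (C z * (starRingEnd ℂ) (C z) * Complex.exp (2 * K z))
              * (-(((G z) ^ 2) ^ 2)⁻¹ * (2 * G z * (G z * Γ z)))) := by
    rw [wirt_comm hUopen hz hΓs, wirtDz_congr hrel_ev]
    have h : wirtDz (fun w => 2 * G w
          - C w * (starRingEnd ℂ) (C w) * Complex.exp (2 * K w) * ((G w) ^ 2)⁻¹) z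
        = wirtDz (fun w => 2 * G w) z
          - wirtDz (fun w => C w * (starRingEnd ℂ) (C w) * Complex.exp (2 * K w) * ((G w) ^ 2)⁻¹) z :=
      wirtDz_sub d2G dQ3
    rw [h, v2G, vQ3]
  -- term 2 : ∂_z̄ (Γ²)
  have eT2 : wirtDzbar (fun w => (Γ w) ^ 2) z = 2 * Γ z * wirtDzbar Γ z := by
    have h2 : (fun w => (Γ w) ^ 2) = fun w => Γ w * Γ w := by funext w; ring
    rw [h2, wirtDzbar_mul dΓ dΓ]; ring
  -- term 3 : ∂_z̄ (2 Γ ∂_z K)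
  have eT3 : wirtDzbar (fun w => 2 * Γ w * wirtDz K w) z
      = 2 * wirtDzbar Γ z * wirtDz K z + 2 * Γ z * G z := by
    have h : wirtDzbar (fun w => 2 * Γ w * wirtDz K w) z
        = wirtDzbar (fun w => 2 * Γ w) z * wirtDz K z + (2 * Γ z) * wirtDzbar (wirtDz K) z :=
      wirtDzbar_mul (dΓ.const_mul 2) dDK
    rw [h, wirtDzbar_const_mul 2 dΓ, e_DbDK]
  -- term 4 : ∂_z̄ (4 ∂_z² K)
  have e_T4' : wirtDzbar (wirtDz (wirtDz K)) z = G z * Γ z := by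
    rw [wirt_comm hUopen hz hDKs, wirtDz_congr hDbDK_ev, hDGz]
  have eT4 : wirtDzbar (fun w => 4 * wirtDz (wirtDz K) w) z = 4 * (G z * Γ z) := by
    rw [wirtDzbar_const_mul 4 dDDK, e_T4']
  -- term 5 : ∂_z̄ (2 (∂_z K)²)
  have eT5 : wirtDzbar (fun w => 2 * (wirtDz K w) ^ 2) z = 4 * wirtDz K z * G z := by
    have h0 : (fun w => 2 * (wirtDz K w) ^ 2) = fun w => 2 * (wirtDz K w * wirtDz K w) := by
      funext w; ring
    rw [h0]
    have h : wirtDzbar (fun w => 2 * (wirtDz K w * wirtDz K w)) z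
        = 2 * wirtDzbar (fun w => wirtDz K w * wirtDz K w) z :=
      wirtDzbar_const_mul 2 (dDK.mul dDK)
    rw [h, wirtDzbar_mul dDK dDK, e_DbDK]; ring
  -- term 6
  have eT6 : wirtDzbar (fun w => (deriv C w / C w) * (2 * wirtDz K w - Γ w)) z
      = (deriv C z / C z) * (2 * G z - wirtDzbar Γ z) := by
    have h : wirtDzbar (fun w => (deriv C w / C w) * (2 * wirtDz K w - Γ w)) z
        = wirtDzbar (fun w => deriv C w / C w) z * (2 * wirtDz K z - Γ z)
          + (deriv C z / C z) * wirtDzbar (fun w => 2 * wirtDz K w - Γ w) z :=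
      wirtDzbar_mul (hdiv.restrictScalars ℝ) ((dDK.const_mul 2).sub dΓ)
    have h2 : wirtDzbar (fun w => 2 * wirtDz K w - Γ w) z
        = wirtDzbar (fun w => 2 * wirtDz K w) z - wirtDzbar Γ z :=
      wirtDzbar_sub (dDK.const_mul 2) dΓ
    rw [h, wirtDzbar_holo hdiv, h2, wirtDzbar_const_mul 2 dDK, e_DbDK]
    ring
  -- differentiability of the pieces of Φ
  have dT2 : DifferentiableAt ℝ (fun w => (Γ w) ^ 2) z := dΓ.pow 2
  have dT3 : DifferentiableAt ℝ (fun w => 2 * Γ w * wirtDz K w) z := (dΓ.const_mul 2).mul dDK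
  have dT4 : DifferentiableAt ℝ (fun w => 4 * wirtDz (wirtDz K) w) z := dDDK.const_mul 4
  have dT5 : DifferentiableAt ℝ (fun w => 2 * (wirtDz K w) ^ 2) z := (dDK.pow 2).const_mul 2
  have dT6 : DifferentiableAt ℝ (fun w => (deriv C w / C w) * (2 * wirtDz K w - Γ w)) z :=
    (hdiv.restrictScalars ℝ).mul ((dDK.const_mul 2).sub dΓ)
  have dS1 : DifferentiableAt ℝ (fun w => wirtDz Γ w + (Γ w) ^ 2) z := dDΓ.add dT2
  have dS2 : DifferentiableAt ℝ (fun w => wirtDz Γ w + (Γ w) ^ 2 - 2 * Γ w * wirtDz K w) z :=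
    dS1.sub dT3
  have dS3 : DifferentiableAt ℝ
      (fun w => wirtDz Γ w + (Γ w) ^ 2 - 2 * Γ w * wirtDz K w - 4 * wirtDz (wirtDz K) w) z :=
    dS2.sub dT4
  have dS4 : DifferentiableAt ℝ
      (fun w => wirtDz Γ w + (Γ w) ^ 2 - 2 * Γ w * wirtDz K w - 4 * wirtDz (wirtDz K) w
        + 2 * (wirtDz K w) ^ 2) z := dS3.add dT5
  -- decompose ∂_z̄ Φ
  have a5 : wirtDzbar Φ z
      = wirtDzbar (fun w => wirtDz Γ w + (Γ w) ^ 2 - 2 * Γ w * wirtDz K w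
          - 4 * wirtDz (wirtDz K) w + 2 * (wirtDz K w) ^ 2) z
        + wirtDzbar (fun w => (deriv C w / C w) * (2 * wirtDz K w - Γ w)) z := by
    rw [hΦdef]; exact wirtDzbar_add dS4 dT6
  have a4 : wirtDzbar (fun w => wirtDz Γ w + (Γ w) ^ 2 - 2 * Γ w * wirtDz K w
        - 4 * wirtDz (wirtDz K) w + 2 * (wirtDz K w) ^ 2) z
      = wirtDzbar (fun w => wirtDz Γ w + (Γ w) ^ 2 - 2 * Γ w * wirtDz K w
          - 4 * wirtDz (wirtDz K) w) z + wirtDzbar (fun w => 2 * (wirtDz K w) ^ 2) z :=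
    wirtDzbar_add dS3 dT5
  have a3 : wirtDzbar (fun w => wirtDz Γ w + (Γ w) ^ 2 - 2 * Γ w * wirtDz K w
        - 4 * wirtDz (wirtDz K) w) z
      = wirtDzbar (fun w => wirtDz Γ w + (Γ w) ^ 2 - 2 * Γ w * wirtDz K w) z
        - wirtDzbar (fun w => 4 * wirtDz (wirtDz K) w) z :=
    wirtDzbar_sub dS2 dT4
  have a2 : wirtDzbar (fun w => wirtDz Γ w + (Γ w) ^ 2 - 2 * Γ w * wirtDz K w) z
      = wirtDzbar (fun w => wirtDz Γ w + (Γ w) ^ 2) z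
        - wirtDzbar (fun w => 2 * Γ w * wirtDz K w) z :=
    wirtDzbar_sub dS1 dT3
  have a1 : wirtDzbar (fun w => wirtDz Γ w + (Γ w) ^ 2) z
      = wirtDzbar (wirtDz Γ) z + wirtDzbar (fun w => (Γ w) ^ 2) z :=
    wirtDzbar_add dDΓ dT2
  rw [a5, a4, a3, a2, a1, eT1, eT2, eT3, eT4, eT5, eT6, hrel z hz]
  have h2 : (((G z) ^ 2) ^ 2)⁻¹ = ((G z) ^ 2)⁻¹ * ((G z) ^ 2)⁻¹ := by rw [pow_two, mul_inv]
  rw [h2]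
  have hgi : (G z) ^ 2 * ((G z) ^ 2)⁻¹ = 1 := mul_inv_cancel₀ (pow_ne_zero 2 (hGne z hz))
  have hci : C z * (C z)⁻¹ = 1 := mul_inv_cancel₀ (hCne z hz)
  linear_combination (2 * C z * (starRingEnd ℂ) (C z) * Complex.exp (2 * K z) * Γ z * ((G z) ^ 2)⁻¹) * hgi
    + (deriv C z * (starRingEnd ℂ) (C z) * Complex.exp (2 * K z) * ((G z) ^ 2)⁻¹) * hci
end

section
/- Assume Setting (★): U ⊆ ℂ is a nonempty connected open set, r is a nonzero real number, α : U → ℂ∖{0,1} is holomorphic, A : U → ℂ is holomorphic and nowhere vanishing, (1/2πi)α′ = α(1−α)A² on U, and A = ω₀ ∘ α for some holomorphic solution ω₀ of α(1−α)ω₀″ + (1−2α)ω₀′ − (1/r)(1−1/r)ω₀ = 0 on an open set containing α(U). Then, with ∂_τ = (1/2πi)d/dτ, the function A satisfies A·∂_τ²A = 2(∂_τA)² + (1/r)(1 − 1/r)·α(1−α)·A⁶ on U; equivalently, ∂_τ²(log A) = (∂_τ log A)² + (1/r)(1−1/r)·α(1−α)·A⁴. -/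
open Complex Filter Topology

/-- In Setting (★) (`U ⊆ ℂ` nonempty connected open, `r` nonzero real,
`α : U → ℂ∖{0,1}` holomorphic, `A` holomorphic nowhere vanishing, `(1/2πi)α′ = α(1−α)A²`,
and `A = ω₀ ∘ α` for a holomorphic solution `ω₀` of the hypergeometric equation
`z(1−z)ω₀″ + (1−2z)ω₀′ − (1/r)(1−1/r)ω₀ = 0` on an open set containing `α(U)`),
one has `A·∂_τ²A = 2(∂_τA)² + (1/r)(1−1/r)·α(1−α)·A⁶` on `U`, where
`∂_τ = (1/2πi)d/dτ`. -/
theorem stmt_10 (U : Set ℂ) (hUopen : IsOpen U) (hUconn : IsConnected U)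
    (r : ℝ) (hr : r ≠ 0)
    (α A : ℂ → ℂ)
    (hα : DifferentiableOn ℂ α U) (hα01 : ∀ τ ∈ U, α τ ≠ 0 ∧ α τ ≠ 1)
    (hA : DifferentiableOn ℂ A U) (hAne : ∀ τ ∈ U, A τ ≠ 0)
    (hrel : ∀ τ ∈ U,
      (1 / (2 * (Real.pi : ℂ) * Complex.I)) * deriv α τ = α τ * (1 - α τ) * (A τ) ^ 2)
    (ω₀ : ℂ → ℂ) (W : Set ℂ) (hWopen : IsOpen W) (hWsub : α '' U ⊆ W)
    (hω₀ : DifferentiableOn ℂ ω₀ W)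
    (hω₀eq : ∀ z ∈ W,
      z * (1 - z) * deriv (deriv ω₀) z + (1 - 2 * z) * deriv ω₀ z
        - (1 / (r : ℂ)) * (1 - 1 / (r : ℂ)) * ω₀ z = 0)
    (hAω : ∀ τ ∈ U, A τ = ω₀ (α τ)) :
    ∀ τ ∈ U,
      A τ * ((1 / (2 * (Real.pi : ℂ) * Complex.I)) ^ 2 * deriv (deriv A) τ)
        = 2 * ((1 / (2 * (Real.pi : ℂ) * Complex.I)) * deriv A τ) ^ 2
          + (1 / (r : ℂ)) * (1 - 1 / (r : ℂ)) * α τ * (1 - α τ) * (A τ) ^ 6 := by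
  intro τ hτ
  set c : ℂ := 2 * (Real.pi : ℂ) * Complex.I with hc_def
  have hc : c ≠ 0 := by
    simp [hc_def, Real.pi_ne_zero, Complex.I_ne_zero, Complex.ofReal_ne_zero]
  have hUτ : U ∈ 𝓝 τ := hUopen.mem_nhds hτ
  have hαan : AnalyticOnNhd ℂ α U := hα.analyticOnNhd hUopen
  have hAan : AnalyticOnNhd ℂ A U := hA.analyticOnNhd hUopen
  have hωan : AnalyticOnNhd ℂ ω₀ W := hω₀.analyticOnNhd hWopen
  have hzW : α τ ∈ W := hWsub ⟨τ, hτ, rfl⟩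
  -- pointwise derivative formulas
  have hdα : ∀ t ∈ U, deriv α t = c * (α t * (1 - α t) * A t ^ 2) := by
    intro t ht
    have h := hrel t ht
    field_simp at h
    rw [h]; ring
  have hdA : ∀ t ∈ U, deriv A t = deriv ω₀ (α t) * deriv α t := by
    intro t ht
    have htU : U ∈ 𝓝 t := hUopen.mem_nhds ht
    have hzW' : α t ∈ W := hWsub ⟨t, ht, rfl⟩
    have hαd : HasDerivAt α (deriv α t) t := ((hαan t ht).differentiableAt).hasDerivAt
    have hωd : HasDerivAt ω₀ (deriv ω₀ (α t)) (α t) :=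
      ((hωan (α t) hzW').differentiableAt).hasDerivAt
    have hcomp : HasDerivAt (fun s => ω₀ (α s)) (deriv ω₀ (α t) * deriv α t) t :=
      hωd.comp t hαd
    have heq : A =ᶠ[𝓝 t] fun s => ω₀ (α s) :=
      Filter.eventually_of_mem htU fun x hx => hAω x hx
    have : HasDerivAt A (deriv ω₀ (α t) * deriv α t) t :=
      hcomp.congr_of_eventuallyEq heq
    exact this.deriv
  -- derivatives at τ
  have hαd : HasDerivAt α (deriv α τ) τ := ((hαan τ hτ).differentiableAt).hasDerivAt
  have hAd : HasDerivAt A (deriv A τ) τ := ((hAan τ hτ).differentiableAt).hasDerivAt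
  have hω'd : HasDerivAt (deriv ω₀) (deriv (deriv ω₀) (α τ)) (α τ) :=
    (((hωan.deriv) (α τ) hzW).differentiableAt).hasDerivAt
  have hE : HasDerivAt (fun t => α t * (1 - α t) * A t ^ 2)
      ((deriv α τ * (1 - α τ) + α τ * (0 - deriv α τ)) * A τ ^ 2
        + α τ * (1 - α τ) * ((2 : ℕ) * A τ ^ 1 * deriv A τ)) τ :=
    (hαd.mul ((hasDerivAt_const τ (1 : ℂ)).sub hαd)).mul (hAd.pow 2)
  have hg1 : HasDerivAt (fun t => deriv ω₀ (α t))
      (deriv (deriv ω₀) (α τ) * deriv α τ) τ := hω'd.comp τ hαd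
  have h2 : HasDerivAt (fun t => deriv ω₀ (α t) * (c * (α t * (1 - α t) * A t ^ 2)))
      (deriv (deriv ω₀) (α τ) * deriv α τ * (c * (α τ * (1 - α τ) * A τ ^ 2))
        + deriv ω₀ (α τ) * (c * ((deriv α τ * (1 - α τ) + α τ * (0 - deriv α τ)) * A τ ^ 2
          + α τ * (1 - α τ) * ((2 : ℕ) * A τ ^ 1 * deriv A τ)))) τ :=
    hg1.mul (hE.const_mul c)
  have heq2 : deriv A =ᶠ[𝓝 τ] fun t => deriv ω₀ (α t) * (c * (α t * (1 - α t) * A t ^ 2)) :=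
    Filter.eventually_of_mem hUτ fun x hx => by rw [hdA x hx, hdα x hx]
  have hAA : HasDerivAt (deriv A)
      (deriv (deriv ω₀) (α τ) * deriv α τ * (c * (α τ * (1 - α τ) * A τ ^ 2))
        + deriv ω₀ (α τ) * (c * ((deriv α τ * (1 - α τ) + α τ * (0 - deriv α τ)) * A τ ^ 2
          + α τ * (1 - α τ) * ((2 : ℕ) * A τ ^ 1 * deriv A τ)))) τ :=
    h2.congr_of_eventuallyEq heq2
  have hA'' := hAA.deriv
  have hA' : deriv A τ = deriv ω₀ (α τ) * (c * (α τ * (1 - α τ) * A τ ^ 2)) := by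
    rw [hdA τ hτ, hdα τ hτ]
  have he := hω₀eq (α τ) hzW
  have hAτ : A τ = ω₀ (α τ) := hAω τ hτ
  rw [show (1 / (2 * (Real.pi : ℂ) * Complex.I)) = 1 / c from rfl]
  rw [hA'', hdα τ hτ, hA', hAτ]
  field_simp
  ring_nf
  linear_combination (c * α τ * (1 - α τ) * (ω₀ (α τ)) ^ 5) * he
end
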